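/- arXiv:1604.05927 — 8 statements merged into one kernel-verified Lean document; each statement's English description precedes it below -/
import Mathlib

section
/- Suppose the data set X^n in ℝ^p (with n > p ≥ 1) is in general position and the affine span of the Tukey median region M has dimension equal to p (equivalently, M has nonempty interior). Then the maximum Tukey depth satisfies λ* ≤ ⌊(n − p + 1)/2⌋ / n. -/
open scoped RealInnerProductSpace

/-- Number of data points in the closed halfspace `{y : ⟪u, y⟫ ≤ ⟪u, x⟫}`. -/
noncomputable def depthCount {p n : ℕ} (X : Fin n → EuclideanSpace ℝ (Fin p))
    (u x : EuclideanSpace ℝ (Fin p)) : ℕ :=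
  Nat.card {i : Fin n // ⟪u, X i⟫ ≤ ⟪u, x⟫}

/-- Tukey (halfspace) depth of `x` with respect to the data set `X`:
`(1/n) · inf` over nonzero `u` of the number of data points `i` with `⟪u, X i⟫ ≤ ⟪u, x⟫`. -/
noncomputable def tukeyDepth {p n : ℕ} (X : Fin n → EuclideanSpace ℝ (Fin p))
    (x : EuclideanSpace ℝ (Fin p)) : ℝ :=
  (sInf {k : ℕ | ∃ u : EuclideanSpace ℝ (Fin p), u ≠ 0 ∧ k = depthCount X u x} : ℕ) / n

/-- Maximum Tukey depth `λ* = sup_x D(x)`. -/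
noncomputable def maxDepth {p n : ℕ} (X : Fin n → EuclideanSpace ℝ (Fin p)) : ℝ :=
  ⨆ x, tukeyDepth X x

/-- Tukey median region `M = {x : D(x) = λ*}`. -/
def medianRegion {p n : ℕ} (X : Fin n → EuclideanSpace ℝ (Fin p)) :
    Set (EuclideanSpace ℝ (Fin p)) :=
  {x | tukeyDepth X x = maxDepth X}

/-- The data set is in general position: every affine hyperplane
(set of the form `{y : ⟪u, y⟫ = c}` with `u ≠ 0`) contains at most `p` of the points. -/
def InGeneralPosition {p n : ℕ} (X : Fin n → EuclideanSpace ℝ (Fin p)) : Prop :=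
  ∀ u : EuclideanSpace ℝ (Fin p), u ≠ 0 → ∀ c : ℝ,
    Nat.card {i : Fin n // ⟪u, X i⟫ = c} ≤ p

namespace TukeyAux

variable {p n : ℕ}

/-- Integer-valued Tukey depth. -/
noncomputable def intDepth (X : Fin n → EuclideanSpace ℝ (Fin p))
    (x : EuclideanSpace ℝ (Fin p)) : ℕ :=
  sInf {k : ℕ | ∃ u : EuclideanSpace ℝ (Fin p), u ≠ 0 ∧ k = depthCount X u x}

lemma tukeyDepth_eq (X : Fin n → EuclideanSpace ℝ (Fin p)) (x : EuclideanSpace ℝ (Fin p)) :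
    tukeyDepth X x = (intDepth X x : ℝ) / n := rfl

lemma exists_unit (hp : 1 ≤ p) : ∃ u : EuclideanSpace ℝ (Fin p), u ≠ 0 := by
  refine ⟨EuclideanSpace.single ⟨0, hp⟩ (1:ℝ), fun h => ?_⟩
  have h2 : (EuclideanSpace.single (⟨0, hp⟩ : Fin p) (1:ℝ)) ⟨0, hp⟩ = 0 := by rw [h]; rfl
  rw [EuclideanSpace.single_apply] at h2
  simp at h2

lemma depthCount_eq_ncard (X : Fin n → EuclideanSpace ℝ (Fin p))
    (u x : EuclideanSpace ℝ (Fin p)) :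
    depthCount X u x = {i : Fin n | ⟪u, X i⟫ ≤ ⟪u, x⟫}.ncard :=
  Nat.card_coe_set_eq _

lemma ncard_le_n (s : Set (Fin n)) : s.ncard ≤ n := by
  have := Set.ncard_le_ncard (Set.subset_univ s) Set.finite_univ
  simpa [Set.ncard_univ] using this

lemma depthCount_le_n (X : Fin n → EuclideanSpace ℝ (Fin p))
    (u x : EuclideanSpace ℝ (Fin p)) : depthCount X u x ≤ n := by
  rw [depthCount_eq_ncard]; exact ncard_le_n _

lemma intDepth_le_depthCount (X : Fin n → EuclideanSpace ℝ (Fin p))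
    (x : EuclideanSpace ℝ (Fin p)) {u : EuclideanSpace ℝ (Fin p)} (hu : u ≠ 0) :
    intDepth X x ≤ depthCount X u x := Nat.sInf_le ⟨u, hu, rfl⟩

lemma intDepth_le_n (hp : 1 ≤ p) (X : Fin n → EuclideanSpace ℝ (Fin p))
    (x : EuclideanSpace ℝ (Fin p)) : intDepth X x ≤ n := by
  obtain ⟨u, hu⟩ := exists_unit (p := p) hp
  exact le_trans (intDepth_le_depthCount X x hu) (depthCount_le_n X u x)

lemma exists_max (hp : 1 ≤ p) (X : Fin n → EuclideanSpace ℝ (Fin p)) :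
    ∃ x0, ∀ x, intDepth X x ≤ intDepth X x0 := by
  have hbdd : BddAbove (Set.range (intDepth X)) :=
    ⟨n, by rintro k ⟨x, rfl⟩; exact intDepth_le_n hp X x⟩
  have hne : (Set.range (intDepth X)).Nonempty := ⟨intDepth X 0, ⟨0, rfl⟩⟩
  obtain ⟨x0, hx0⟩ := Nat.sSup_mem hne hbdd
  exact ⟨x0, fun x => hx0 ▸ le_csSup hbdd ⟨x, rfl⟩⟩

lemma maxDepth_eq (hn0 : 0 < n) {X : Fin n → EuclideanSpace ℝ (Fin p)}
    {x0 : EuclideanSpace ℝ (Fin p)} (hx0 : ∀ x, intDepth X x ≤ intDepth X x0) :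
    maxDepth X = (intDepth X x0 : ℝ) / n := by
  have hnR : (0:ℝ) < n := by exact_mod_cast hn0
  have hb : ∀ x, tukeyDepth X x ≤ (intDepth X x0 : ℝ) / n := by
    intro x
    rw [tukeyDepth_eq]
    gcongr
    exact_mod_cast hx0 x
  refine le_antisymm (ciSup_le hb) ?_
  have hbd : BddAbove (Set.range (tukeyDepth X)) := by
    refine ⟨(intDepth X x0 : ℝ) / n, ?_⟩
    rintro r ⟨x, rfl⟩
    exact hb x
  calc (intDepth X x0 : ℝ) / n = tukeyDepth X x0 := (tukeyDepth_eq X x0).symm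
    _ ≤ maxDepth X := le_ciSup hbd x0

lemma mem_medianRegion_x0 (hn0 : 0 < n) {X : Fin n → EuclideanSpace ℝ (Fin p)}
    {x0 : EuclideanSpace ℝ (Fin p)} (hx0 : ∀ x, intDepth X x ≤ intDepth X x0) :
    x0 ∈ medianRegion X := by
  show tukeyDepth X x0 = maxDepth X
  rw [maxDepth_eq hn0 hx0, tukeyDepth_eq]

lemma median_depthCount (hn0 : 0 < n) {X : Fin n → EuclideanSpace ℝ (Fin p)}
    {x0 : EuclideanSpace ℝ (Fin p)} (hx0 : ∀ x, intDepth X x ≤ intDepth X x0)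
    {y : EuclideanSpace ℝ (Fin p)} (hy : y ∈ medianRegion X)
    {u : EuclideanSpace ℝ (Fin p)} (hu : u ≠ 0) :
    intDepth X x0 ≤ depthCount X u y := by
  have h1 : tukeyDepth X y = maxDepth X := hy
  rw [maxDepth_eq hn0 hx0, tukeyDepth_eq] at h1
  have hnR : (n:ℝ) ≠ 0 := by positivity
  have h2 : intDepth X y = intDepth X x0 := by
    have h3 : (intDepth X y : ℝ) = intDepth X x0 := by
      field_simp at h1
      exact_mod_cast h1
    exact_mod_cast h3
  exact h2 ▸ intDepth_le_depthCount X y hu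

lemma exists_notin_hyperplane {X : Fin n → EuclideanSpace ℝ (Fin p)}
    (hdim : Module.finrank ℝ (affineSpan ℝ (medianRegion X)).direction = p)
    {u : EuclideanSpace ℝ (Fin p)} (hu : u ≠ 0) (c : ℝ) :
    ∃ y ∈ medianRegion X, ⟪u, y⟫ ≠ c := by
  by_contra hcon
  push_neg at hcon
  set f : EuclideanSpace ℝ (Fin p) →ₗ[ℝ] ℝ := (innerSL ℝ u).toLinearMap with hf
  have hle : vectorSpan ℝ (medianRegion X) ≤ LinearMap.ker f := by
    rw [vectorSpan_def]
    refine Submodule.span_le.2 ?_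
    rintro v ⟨y, hy, z, hz, rfl⟩
    have : f (y -ᵥ z) = 0 := by
      simp [hf, vsub_eq_sub, inner_sub_right, hcon y hy, hcon z hz]
    simpa [LinearMap.mem_ker] using this
  have hproper : LinearMap.ker f < ⊤ := by
    refine lt_top_iff_ne_top.2 fun ht => ?_
    have h0 : f = 0 := LinearMap.ker_eq_top.1 ht
    have : ⟪u, u⟫ = 0 := by
      have := congrArg (fun g => g u) h0
      simpa [hf] using this
    exact hu (inner_self_eq_zero.1 this)
  have h1 : Module.finrank ℝ (vectorSpan ℝ (medianRegion X)) ≤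
      Module.finrank ℝ (LinearMap.ker f) := Submodule.finrank_mono hle
  have h2 : Module.finrank ℝ (LinearMap.ker f) < p := by
    have := Submodule.finrank_lt hproper.ne
    simpa using this
  rw [direction_affineSpan] at hdim
  omega

/-- The affine evaluation of a (hyperplane datum) `w = (u, c)` at a point `y`. -/
noncomputable def efun (y : EuclideanSpace ℝ (Fin p))
    (w : EuclideanSpace ℝ (Fin p) × ℝ) : ℝ :=
  ⟪w.1, y⟫ - w.2

lemma efun_comb (y : EuclideanSpace ℝ (Fin p)) (a b : ℝ)
    (w1 w2 : EuclideanSpace ℝ (Fin p) × ℝ) :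
    efun y (a • w1 + b • w2) = a * efun y w1 + b * efun y w2 := by
  simp only [efun, Prod.fst_add, Prod.snd_add, Prod.smul_fst, Prod.smul_snd,
    inner_add_left, real_inner_smul_left, smul_eq_mul]
  ring

/-- Constraint map: `w = (u, c)` is sent to the values `⟪u, Y j⟫ - c`. -/
noncomputable def Tmap (m : ℕ) (Y : Fin m → EuclideanSpace ℝ (Fin p)) :
    (EuclideanSpace ℝ (Fin p) × ℝ) →ₗ[ℝ] (Fin m → ℝ) where
  toFun w := fun j => efun (Y j) w
  map_add' w w' := by
    funext j
    simp only [efun, Prod.fst_add, Prod.snd_add, inner_add_left, Pi.add_apply]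
    ring
  map_smul' c w := by
    funext j
    simp only [efun, Prod.smul_fst, Prod.smul_snd, real_inner_smul_left, smul_eq_mul,
      RingHom.id_apply, Pi.smul_apply]
    ring

lemma two_le_finrank_ker {m : ℕ} (hm : m ≤ p - 1) (hp : 1 ≤ p)
    (Y : Fin m → EuclideanSpace ℝ (Fin p)) :
    2 ≤ Module.finrank ℝ (LinearMap.ker (Tmap m Y)) := by
  have h1 := LinearMap.finrank_range_add_finrank_ker (Tmap m Y)
  have h2 : Module.finrank ℝ (EuclideanSpace ℝ (Fin p) × ℝ) = p + 1 := by
    rw [Module.finrank_prod]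
    simp
  have h3 : Module.finrank ℝ (LinearMap.range (Tmap m Y)) ≤ m := by
    have h4 := Submodule.finrank_le (LinearMap.range (Tmap m Y))
    have h5 : Module.finrank ℝ (Fin m → ℝ) = m := by simp
    omega
  omega

lemma ker_fst_ne_zero {m : ℕ} (hm : 1 ≤ m) (Y : Fin m → EuclideanSpace ℝ (Fin p))
    {w : EuclideanSpace ℝ (Fin p) × ℝ} (hw : w ∈ LinearMap.ker (Tmap m Y))
    (hw0 : w ≠ 0) : w.1 ≠ 0 := by
  intro h1
  apply hw0
  have hT : Tmap m Y w = 0 := LinearMap.mem_ker.1 hw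
  have h2 := congrFun hT ⟨0, hm⟩
  have h3 : w.2 = 0 := by
    simpa [Tmap, efun, h1] using h2
  have : w = (w.1, w.2) := rfl
  rw [this, h1, h3]
  rfl

lemma pair_indep {V : Type*} [AddCommGroup V] [Module ℝ V] {k : ℕ}
    (B : Module.Basis (Fin k) ℝ V) {i j : Fin k} (hij : i ≠ j) {a b : ℝ}
    (h : a • B i + b • B j = 0) : a = 0 ∧ b = 0 := by
  have h2 := congrArg B.repr h
  rw [map_add, map_smul, map_smul, B.repr_self, B.repr_self, map_zero] at h2
  have ha := DFunLike.congr_fun h2 i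
  have hb := DFunLike.congr_fun h2 j
  simp [Finsupp.single_apply, hij, hij.symm] at ha hb
  exact ⟨ha, hb⟩

set_option maxHeartbeats 2000000 in
lemma exists_good_hyperplane (hp : 1 ≤ p) (hn : p < n)
    (X : Fin n → EuclideanSpace ℝ (Fin p))
    (hdim : Module.finrank ℝ (affineSpan ℝ (medianRegion X)).direction = p) :
    ∃ (u : EuclideanSpace ℝ (Fin p)) (c : ℝ), u ≠ 0 ∧
      p - 1 ≤ {i : Fin n | ⟪u, X i⟫ = c}.ncard ∧
      (∃ y ∈ medianRegion X, ⟪u, y⟫ < c) ∧ (∃ z ∈ medianRegion X, c < ⟪u, z⟫) := by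
  rcases eq_or_lt_of_le hp with hp1 | hp2
  · -- p = 1 : just need two distinct median points
    have hne : ∃ y ∈ medianRegion X, ∃ z ∈ medianRegion X, y ≠ z := by
      by_contra hcon
      push_neg at hcon
      have hbot : vectorSpan ℝ (medianRegion X) ≤ ⊥ := by
        rw [vectorSpan_def]
        refine Submodule.span_le.2 ?_
        rintro v ⟨y, hy, z, hz, rfl⟩
        simp [vsub_eq_sub, hcon y hy z hz]
      have h0 : Module.finrank ℝ (vectorSpan ℝ (medianRegion X)) = 0 := by
        rw [le_bot_iff.1 hbot]
        simp
      rw [direction_affineSpan] at hdim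
      omega
    obtain ⟨y, hy, z, hz, hyz⟩ := hne
    have huz : (z - y : EuclideanSpace ℝ (Fin p)) ≠ 0 := sub_ne_zero.2 (Ne.symm hyz)
    have hlt : ⟪z - y, y⟫ < ⟪z - y, z⟫ := by
      have h : (0:ℝ) < ⟪z - y, z - y⟫ := by
        rcases lt_or_eq_of_le (real_inner_self_nonneg (x := z - y)) with h | h
        · exact h
        · exact absurd (inner_self_eq_zero.1 h.symm) huz
      rw [inner_sub_right] at h
      linarith
    refine ⟨z - y, (⟪z - y, y⟫ + ⟪z - y, z⟫) / 2, huz, ?_, ⟨y, hy, by linarith⟩,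
      ⟨z, hz, by linarith⟩⟩
    simp [← hp1]
  · -- p ≥ 2
    set m : ℕ := p - 1 with hm
    have hm1 : 1 ≤ m := by omega
    have hmn : m ≤ n := by omega
    set Y : Fin m → EuclideanSpace ℝ (Fin p) := fun j => X (Fin.castLE hmn j) with hY
    set T := Tmap m Y with hT
    have hker2 : 2 ≤ Module.finrank ℝ (LinearMap.ker T) :=
      two_le_finrank_ker (le_refl m) hp Y
    set B := Module.finBasis ℝ (LinearMap.ker T) with hB
    set i0 : Fin (Module.finrank ℝ (LinearMap.ker T)) := ⟨0, by omega⟩ with hi0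
    set i1 : Fin (Module.finrank ℝ (LinearMap.ker T)) := ⟨1, by omega⟩ with hi1
    have hij : i0 ≠ i1 := by
      intro h
      have := congrArg Fin.val h
      simp [hi0, hi1] at this
    set v1 := B i0 with hv1
    set v2 := B i1 with hv2
    -- nonzero combinations of v1, v2 have nonzero first component
    have hcombo : ∀ a b : ℝ, ¬(a = 0 ∧ b = 0) →
        ((a • v1 + b • v2 : LinearMap.ker T) : EuclideanSpace ℝ (Fin p) × ℝ) ≠ 0 := by
      intro a b hab h0
      have h1 : (a • v1 + b • v2 : LinearMap.ker T) = 0 := by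
        exact_mod_cast h0
      exact hab (pair_indep B hij h1)
    have hcoe : ∀ a b : ℝ,
        ((a • v1 + b • v2 : LinearMap.ker T) : EuclideanSpace ℝ (Fin p) × ℝ)
          = a • (v1 : EuclideanSpace ℝ (Fin p) × ℝ) + b • (v2 : EuclideanSpace ℝ (Fin p) × ℝ) := by
      intro a b
      push_cast
      rfl
    -- a vector in the kernel gives a hyperplane through the Y j's
    have hhyp : ∀ w : EuclideanSpace ℝ (Fin p) × ℝ, w ∈ LinearMap.ker T →
        ∀ j : Fin m, ⟪w.1, Y j⟫ = w.2 := by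
      intro w hw j
      have hTw : T w = 0 := LinearMap.mem_ker.1 hw
      have := congrFun hTw j
      have h2 : efun (Y j) w = 0 := this
      rw [efun] at h2
      linarith
    have hcard : ∀ (w : EuclideanSpace ℝ (Fin p) × ℝ), w ∈ LinearMap.ker T →
        p - 1 ≤ {i : Fin n | ⟪w.1, X i⟫ = w.2}.ncard := by
      intro w hw
      have hsub : Set.range (Fin.castLE hmn) ⊆ {i : Fin n | ⟪w.1, X i⟫ = w.2} := by
        rintro i ⟨j, rfl⟩
        exact hhyp w hw j
      have h1 : (Set.range (Fin.castLE hmn)).ncard = m := by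
        rw [← Nat.card_coe_set_eq, Nat.card_range_of_injective (Fin.castLE_injective hmn)]
        simp
      calc p - 1 = m := hm
        _ = (Set.range (Fin.castLE hmn)).ncard := h1.symm
        _ ≤ _ := Set.ncard_le_ncard hsub (Set.toFinite _)
    by_cases hdet : ∃ y ∈ medianRegion X, ∃ z ∈ medianRegion X,
        efun y (v1 : EuclideanSpace ℝ (Fin p) × ℝ) * efun z (v2 : EuclideanSpace ℝ (Fin p) × ℝ)
          - efun y (v2 : EuclideanSpace ℝ (Fin p) × ℝ) * efun z (v1 : EuclideanSpace ℝ (Fin p) × ℝ) ≠ 0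
    · obtain ⟨y, hy, z, hz, hΔ⟩ := hdet
      set α := efun y (v1 : EuclideanSpace ℝ (Fin p) × ℝ) with hα
      set β := efun y (v2 : EuclideanSpace ℝ (Fin p) × ℝ) with hβ
      set γ := efun z (v1 : EuclideanSpace ℝ (Fin p) × ℝ) with hγ
      set δ := efun z (v2 : EuclideanSpace ℝ (Fin p) × ℝ) with hδ
      set Δ : ℝ := α * δ - β * γ with hΔdef
      set a : ℝ := (-δ - β) / Δ with ha
      set b : ℝ := (γ + α) / Δ with hb
      set v : LinearMap.ker T := a • v1 + b • v2 with hv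
      set w : EuclideanSpace ℝ (Fin p) × ℝ := (v : EuclideanSpace ℝ (Fin p) × ℝ) with hw
      have heyw : efun y w = -1 := by
        rw [hw, hv, hcoe, efun_comb, ← hα, ← hβ, ha, hb]
        field_simp
        ring
      have hezw : efun z w = 1 := by
        rw [hw, hv, hcoe, efun_comb, ← hγ, ← hδ, ha, hb]
        field_simp
        ring
      have hwne : w ≠ 0 := by
        intro h0
        rw [h0] at heyw
        simp [efun] at heyw
      have hwker : w ∈ LinearMap.ker T := v.2
      have hu : w.1 ≠ 0 := ker_fst_ne_zero hm1 Y hwker hwne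
      refine ⟨w.1, w.2, hu, hcard w hwker, ⟨y, hy, ?_⟩, ⟨z, hz, ?_⟩⟩
      · rw [efun] at heyw; linarith
      · rw [efun] at hezw; linarith
    · exfalso
      push_neg at hdet
      by_cases h0 : ∀ y ∈ medianRegion X, efun y (v1 : EuclideanSpace ℝ (Fin p) × ℝ) = 0
      · -- v1 itself gives a hyperplane containing M, contradiction
        have hv1ne : (v1 : EuclideanSpace ℝ (Fin p) × ℝ) ≠ 0 := by
          intro h
          exact B.ne_zero i0 (by exact_mod_cast h)
        have hu1 : (v1 : EuclideanSpace ℝ (Fin p) × ℝ).1 ≠ 0 :=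
          ker_fst_ne_zero hm1 Y v1.2 hv1ne
        obtain ⟨y, hy, hyne⟩ := exists_notin_hyperplane hdim hu1
          (v1 : EuclideanSpace ℝ (Fin p) × ℝ).2
        have := h0 y hy
        rw [efun] at this
        exact hyne (by linarith)
      · push_neg at h0
        obtain ⟨y0, hy0, hy0ne⟩ := h0
        set a : ℝ := efun y0 (v2 : EuclideanSpace ℝ (Fin p) × ℝ) with ha
        set b : ℝ := -efun y0 (v1 : EuclideanSpace ℝ (Fin p) × ℝ) with hb
        have hbne : b ≠ 0 := by
          rw [hb]
          exact neg_ne_zero.2 hy0ne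
        set v : LinearMap.ker T := a • v1 + b • v2 with hv
        set w : EuclideanSpace ℝ (Fin p) × ℝ := (v : EuclideanSpace ℝ (Fin p) × ℝ) with hw
        have hezero : ∀ y ∈ medianRegion X, efun y w = 0 := by
          intro y hy
          rw [hw, hv, hcoe, efun_comb, ha, hb]
          have hd := hdet y hy y0 hy0
          ring_nf
          ring_nf at hd
          linarith
        have hwne : w ≠ 0 := hcombo a b (fun h => hbne h.2)
        have hwker : w ∈ LinearMap.ker T := v.2
        have hu : w.1 ≠ 0 := ker_fst_ne_zero hm1 Y hwker hwne
        obtain ⟨y, hy, hyne⟩ := exists_notin_hyperplane hdim hu w.2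
        have := hezero y hy
        rw [efun] at this
        exact hyne (by linarith)

end TukeyAux

/-- If `Xⁿ` is in general position and the median region has affine dimension `p`,
then `λ* ≤ ⌊(n - p + 1)/2⌋ / n`. -/
theorem maxDepth_le_of_fullDim {p n : ℕ} (hp : 1 ≤ p) (hn : p < n)
    (X : Fin n → EuclideanSpace ℝ (Fin p))
    (hgp : InGeneralPosition X)
    (hdim : Module.finrank ℝ (affineSpan ℝ (medianRegion X)).direction = p) :
    maxDepth X ≤ ((n - p + 1) / 2 : ℕ) / (n : ℝ) := by
  have hn0 : 0 < n := by omega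
  obtain ⟨x0, hx0⟩ := TukeyAux.exists_max hp X
  set K := TukeyAux.intDepth X x0 with hK
  obtain ⟨u, c, hu, hcard, ⟨y, hy, hyc⟩, ⟨z, hz, hzc⟩⟩ :=
    TukeyAux.exists_good_hyperplane hp hn X hdim
  have hA : K ≤ {i : Fin n | ⟪u, X i⟫ < c}.ncard := by
    have h1 : K ≤ depthCount X u y := TukeyAux.median_depthCount hn0 hx0 hy hu
    rw [TukeyAux.depthCount_eq_ncard] at h1
    refine le_trans h1 (Set.ncard_le_ncard ?_ (Set.toFinite _))
    intro i hi
    exact lt_of_le_of_lt hi hyc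
  have hC : K ≤ {i : Fin n | c < ⟪u, X i⟫}.ncard := by
    have hu' : (-u : EuclideanSpace ℝ (Fin p)) ≠ 0 := neg_ne_zero.2 hu
    have h1 : K ≤ depthCount X (-u) z := TukeyAux.median_depthCount hn0 hx0 hz hu'
    rw [TukeyAux.depthCount_eq_ncard] at h1
    refine le_trans h1 (Set.ncard_le_ncard ?_ (Set.toFinite _))
    intro i hi
    simp only [Set.mem_setOf_eq, inner_neg_left] at hi ⊢
    linarith
  have hd1 : Disjoint {i : Fin n | ⟪u, X i⟫ < c} {i : Fin n | ⟪u, X i⟫ = c} := by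
    rw [Set.disjoint_left]
    intro i h1 h2
    simp only [Set.mem_setOf_eq] at h1 h2
    linarith
  have hd2 : Disjoint ({i : Fin n | ⟪u, X i⟫ < c} ∪ {i : Fin n | ⟪u, X i⟫ = c})
      {i : Fin n | c < ⟪u, X i⟫} := by
    rw [Set.disjoint_left]
    intro i h1 h2
    simp only [Set.mem_union, Set.mem_setOf_eq] at h1 h2
    rcases h1 with h1 | h1 <;> linarith
  have hsum : {i : Fin n | ⟪u, X i⟫ < c}.ncard + {i : Fin n | ⟪u, X i⟫ = c}.ncard
      + {i : Fin n | c < ⟪u, X i⟫}.ncard ≤ n := by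
    have e1 : ({i : Fin n | ⟪u, X i⟫ < c} ∪ {i : Fin n | ⟪u, X i⟫ = c}).ncard
        = {i : Fin n | ⟪u, X i⟫ < c}.ncard + {i : Fin n | ⟪u, X i⟫ = c}.ncard :=
      Set.ncard_union_eq hd1 (Set.toFinite _) (Set.toFinite _)
    have e2 : (({i : Fin n | ⟪u, X i⟫ < c} ∪ {i : Fin n | ⟪u, X i⟫ = c})
        ∪ {i : Fin n | c < ⟪u, X i⟫}).ncard
        = ({i : Fin n | ⟪u, X i⟫ < c} ∪ {i : Fin n | ⟪u, X i⟫ = c}).ncard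
          + {i : Fin n | c < ⟪u, X i⟫}.ncard :=
      Set.ncard_union_eq hd2 (Set.toFinite _) (Set.toFinite _)
    have e3 := TukeyAux.ncard_le_n (({i : Fin n | ⟪u, X i⟫ < c}
      ∪ {i : Fin n | ⟪u, X i⟫ = c}) ∪ {i : Fin n | c < ⟪u, X i⟫})
    omega
  have hKfin : K ≤ (n - p + 1) / 2 := by omega
  rw [TukeyAux.maxDepth_eq hn0 hx0, ← hK]
  have hKR : (K:ℝ) ≤ ((n - p + 1) / 2 : ℕ) := Nat.cast_le.2 hKfin
  gcongr
end

section
/- Suppose the data set X^n in ℝ^p (with n > p ≥ 1) is in general position and the affine span of the Tukey median region M has dimension strictly less than p (equivalently, M has empty interior). Then the maximum Tukey depth satisfies λ* ≤ ⌊(n − p + 2)/2⌋ / n. -/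
open scoped RealInnerProductSpace

/-- `Nat.card` of a subtype of `Fin n` as a filter cardinality. -/
lemma natcard_subtype {n : ℕ} (P : Fin n → Prop) [DecidablePred P] :
    Nat.card {i : Fin n // P i} = (Finset.univ.filter P).card := by
  simp [Nat.card_eq_fintype_card, Fintype.card_subtype]

/-- Core construction: given a direction `v` orthogonal to `p - 1` of the difference
vectors (witnessed via `ι` and the auxiliary vector `w` with `⟪w, X i - x⟫ = 1` there),
with the hyperplane of `v` through `x` containing at most `p` data points, and the
strictly-negative side of `v` no bigger than the strictly-positive side, we can
perturb `v` to a direction `u` whose closed halfspace at `x` contains at most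
`⌊(n - p + 2)/2⌋` data points. -/
lemma core_halfspace {p n : ℕ} (hp : 1 ≤ p) (hn : p < n)
    (X : Fin n → EuclideanSpace ℝ (Fin p)) (x : EuclideanSpace ℝ (Fin p))
    (v w y₀ : EuclideanSpace ℝ (Fin p))
    (hy₀v : ⟪v, y₀⟫ ≠ 0) (hy₀w : ⟪w, y₀⟫ = 0)
    (ι : Finset (Fin n))
    (hιv : ∀ i ∈ ι, ⟪v, X i - x⟫ = 0)
    (hιw : ∀ i ∈ ι, ⟪w, X i - x⟫ = 1)
    (hιcard : ι.card + 1 = p)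
    (hz : (Finset.univ.filter (fun i => ⟪v, X i - x⟫ = 0)).card ≤ p)
    (hbal : (Finset.univ.filter (fun i => ⟪v, X i - x⟫ < 0)).card ≤
      (Finset.univ.filter (fun i => 0 < ⟪v, X i - x⟫)).card) :
    ∃ u : EuclideanSpace ℝ (Fin p), u ≠ 0 ∧ depthCount X u x ≤ (n - p + 2) / 2 := by
  classical
  set d : Fin n → EuclideanSpace ℝ (Fin p) := fun i => X i - x with hd
  set Am := Finset.univ.filter (fun i => ⟪v, d i⟫ < 0) with hAm
  set A0 := Finset.univ.filter (fun i => ⟪v, d i⟫ = 0) with hA0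
  set Ap := Finset.univ.filter (fun i => 0 < ⟪v, d i⟫) with hAp
  -- choose a small ε > 0
  set T : Finset ℝ := insert 1 (Ap.image (fun i => ⟪v, d i⟫ / (|⟪w, d i⟫| + 1))) with hT
  have hTne : T.Nonempty := ⟨1, Finset.mem_insert_self _ _⟩
  set ε := T.min' hTne with hε
  have hεpos : 0 < ε := by
    have hall : ∀ t ∈ T, 0 < t := by
      intro t ht
      rcases Finset.mem_insert.mp ht with h | h
      · rw [h]; norm_num
      · obtain ⟨i, hi, rfl⟩ := Finset.mem_image.mp h
        have hipos : 0 < ⟪v, d i⟫ := (Finset.mem_filter.mp hi).2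
        have : (0:ℝ) < |⟪w, d i⟫| + 1 := by positivity
        exact div_pos hipos this
    exact hall ε (Finset.min'_mem _ _)
  have hεAp : ∀ i ∈ Ap, 0 < ⟪v, d i⟫ + ε * ⟪w, d i⟫ := by
    intro i hi
    have h1 : ε ≤ ⟪v, d i⟫ / (|⟪w, d i⟫| + 1) :=
      Finset.min'_le _ _ (Finset.mem_insert_of_mem (Finset.mem_image_of_mem _ hi))
    have hpos : (0:ℝ) < |⟪w, d i⟫| + 1 := by positivity
    have h2 : ε * (|⟪w, d i⟫| + 1) ≤ ⟪v, d i⟫ := (le_div_iff₀ hpos).mp h1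
    have h3 : ε * (-⟪w, d i⟫) ≤ ε * |⟪w, d i⟫| :=
      mul_le_mul_of_nonneg_left (neg_le_abs _) hεpos.le
    nlinarith
  set u := v + ε • w with hu
  have hinner : ∀ y, ⟪u, y⟫ = ⟪v, y⟫ + ε * ⟪w, y⟫ := by
    intro y; rw [hu, inner_add_left, real_inner_smul_left]
  have hu0 : u ≠ 0 := by
    intro h0
    have h1 : ⟪u, y₀⟫ = ⟪v, y₀⟫ := by rw [hinner, hy₀w]; ring
    rw [h0, inner_zero_left] at h1
    exact hy₀v h1.symm
  refine ⟨u, hu0, ?_⟩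
  have hιsub : ι ⊆ A0 := by
    intro i hi
    exact Finset.mem_filter.mpr ⟨Finset.mem_univ _, hιv i hi⟩
  set U := Finset.univ.filter (fun i => ⟪u, d i⟫ ≤ 0) with hU
  have hUsub : U ⊆ Am ∪ (A0 \ ι) := by
    intro i hi
    have hile : ⟪u, d i⟫ ≤ 0 := (Finset.mem_filter.mp hi).2
    rcases lt_trichotomy (⟪v, d i⟫) 0 with hlt | heq | hgt
    · exact Finset.mem_union_left _ (Finset.mem_filter.mpr ⟨Finset.mem_univ _, hlt⟩)
    · refine Finset.mem_union_right _ (Finset.mem_sdiff.mpr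
        ⟨Finset.mem_filter.mpr ⟨Finset.mem_univ _, heq⟩, ?_⟩)
      intro hmem
      have : ⟪u, d i⟫ = ε := by rw [hinner, heq, hιw i hmem]; ring
      rw [this] at hile
      exact absurd hile (not_le.mpr hεpos)
    · have hiAp : i ∈ Ap := Finset.mem_filter.mpr ⟨Finset.mem_univ _, hgt⟩
      have := hεAp i hiAp
      rw [← hinner] at this
      exact absurd hile (not_le.mpr this)
  have hdc : depthCount X u x = U.card := by
    rw [depthCount, natcard_subtype]
    have heq : (Finset.univ.filter (fun i => ⟪u, X i⟫ ≤ ⟪u, x⟫)) = U := by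
      apply Finset.filter_congr
      intro i _
      simp only [hd]
      rw [inner_sub_right, sub_nonpos]
    rw [heq]
  -- cardinality bookkeeping
  have hc1 : U.card ≤ Am.card + (A0 \ ι).card :=
    le_trans (Finset.card_le_card hUsub) (Finset.card_union_le _ _)
  have hc2 : (A0 \ ι).card = A0.card - ι.card := Finset.card_sdiff_of_subset hιsub
  have hc3 : ι.card ≤ A0.card := Finset.card_le_card hιsub
  have hdisj1 : Disjoint Am A0 := by
    rw [Finset.disjoint_left]
    intro i h1 h2
    have e1 := (Finset.mem_filter.mp h1).2
    have e2 := (Finset.mem_filter.mp h2).2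
    rw [e2] at e1
    exact lt_irrefl _ e1
  have hdisj2 : Disjoint (Am ∪ A0) Ap := by
    rw [Finset.disjoint_left]
    intro i h1 h2
    have e2 := (Finset.mem_filter.mp h2).2
    rcases Finset.mem_union.mp h1 with h | h
    · have e1 := (Finset.mem_filter.mp h).2
      exact lt_irrefl _ (e1.trans e2)
    · have e1 := (Finset.mem_filter.mp h).2
      rw [e1] at e2
      exact lt_irrefl _ e2
  have hsum : Am.card + A0.card + Ap.card ≤ n := by
    have h1 : ((Am ∪ A0) ∪ Ap).card = Am.card + A0.card + Ap.card := by
      rw [Finset.card_union_of_disjoint hdisj2, Finset.card_union_of_disjoint hdisj1]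
    calc Am.card + A0.card + Ap.card = ((Am ∪ A0) ∪ Ap).card := h1.symm
      _ ≤ (Finset.univ : Finset (Fin n)).card := Finset.card_le_card (Finset.subset_univ _)
      _ = n := by simp
  rw [hdc]
  omega

/-- Pointwise bound: under general position, for every `x` the Tukey depth count of
some halfspace is at most `⌊(n - p + 2)/2⌋`. -/
lemma tukeyDepth_le_of_gp {p n : ℕ} (hp : 1 ≤ p) (hn : p < n)
    (X : Fin n → EuclideanSpace ℝ (Fin p))
    (hgp : InGeneralPosition X) (x : EuclideanSpace ℝ (Fin p)) :
    tukeyDepth X x ≤ ((n - p + 2) / 2 : ℕ) / (n : ℝ) := by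
  classical
  set dfun : Fin n → EuclideanSpace ℝ (Fin p) := fun i => X i - x with hdfun
  -- the difference vectors span the whole space
  have htop : Submodule.span ℝ (Set.range dfun) = ⊤ := by
    by_contra hne
    have hbot : (Submodule.span ℝ (Set.range dfun))ᗮ ≠ ⊥ := by
      intro h
      exact hne ((Submodule.orthogonal_eq_bot_iff).mp h)
    obtain ⟨v, hvmem, hv0⟩ := Submodule.exists_mem_ne_zero_of_ne_bot hbot
    have hall : ∀ i, ⟪v, X i⟫ = ⟪v, x⟫ := by
      intro i
      have hdi : dfun i ∈ Submodule.span ℝ (Set.range dfun) :=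
        Submodule.subset_span ⟨i, rfl⟩
      have h1 : ⟪dfun i, v⟫ = 0 := (Submodule.mem_orthogonal _ v).mp hvmem (dfun i) hdi
      have h2 : ⟪v, dfun i⟫ = 0 := by rw [real_inner_comm]; exact h1
      rw [hdfun] at h2
      simp only [inner_sub_right] at h2
      linarith
    have hcard := hgp v hv0 ⟪v, x⟫
    rw [natcard_subtype] at hcard
    have heq : (Finset.univ.filter (fun i => ⟪v, X i⟫ = ⟪v, x⟫)) = Finset.univ := by
      apply Finset.filter_true_of_mem
      intro i _
      exact hall i
    rw [heq] at hcard
    simp at hcard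
    omega
  -- extract a basis from the difference vectors
  obtain ⟨s, hs_sub, hs_span, hs_ind⟩ := exists_linearIndependent ℝ (Set.range dfun)
  have hsfin : s.Finite := hs_ind.setFinite
  haveI : Fintype s := hsfin.fintype
  let B : Module.Basis s ℝ (EuclideanSpace ℝ (Fin p)) := Module.Basis.mk hs_ind (by rw [Subtype.range_coe, hs_span, htop])
  have hcards : Fintype.card s = p := by
    have h1 := Module.finrank_eq_card_basis B
    rw [show Module.finrank ℝ (EuclideanSpace ℝ (Fin p)) = p from finrank_euclideanSpace_fin] at h1
    omega
  haveI hne_s : Nonempty s := Fintype.card_pos_iff.mp (by omega)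
  set j₀ : s := Classical.arbitrary s with hj₀
  -- indices realizing the basis vectors
  have hidx : ∀ j : s, ∃ i, dfun i = (j : (EuclideanSpace ℝ (Fin p))) := fun j => hs_sub j.2
  choose idx hidx_spec using hidx
  have hidx_inj : Function.Injective idx := by
    intro a b hab
    apply Subtype.ext
    rw [← hidx_spec a, ← hidx_spec b, hab]
  -- dual vectors
  set v₀ : (EuclideanSpace ℝ (Fin p)) := (InnerProductSpace.toDual ℝ (EuclideanSpace ℝ (Fin p))).symm
    (LinearMap.toContinuousLinearMap (B.coord j₀)) with hv₀
  set w : (EuclideanSpace ℝ (Fin p)) := (InnerProductSpace.toDual ℝ (EuclideanSpace ℝ (Fin p))).symm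
    (LinearMap.toContinuousLinearMap (∑ j ∈ Finset.univ.erase j₀, B.coord j)) with hw
  have hv₀_eval : ∀ y : (EuclideanSpace ℝ (Fin p)), ⟪v₀, y⟫ = B.repr y j₀ := by
    intro y
    rw [hv₀, InnerProductSpace.toDual_symm_apply]
    simp [Module.Basis.coord_apply]
  have hw_eval : ∀ y : (EuclideanSpace ℝ (Fin p)), ⟪w, y⟫ = ∑ j ∈ Finset.univ.erase j₀, B.repr y j := by
    intro y
    rw [hw, InnerProductSpace.toDual_symm_apply]
    simp [Module.Basis.coord_apply]
  have hBj : ∀ j : s, B j = (j : (EuclideanSpace ℝ (Fin p))) := by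
    intro j
    rw [show B = Module.Basis.mk hs_ind _ from rfl, Module.Basis.coe_mk]
  have hv₀_on : ∀ j : s, ⟪v₀, (j : (EuclideanSpace ℝ (Fin p)))⟫ = if j = j₀ then 1 else 0 := by
    intro j
    rw [hv₀_eval, ← hBj j, B.repr_self]
    simp [Finsupp.single_apply]
  have hw_on : ∀ j : s, ⟪w, (j : (EuclideanSpace ℝ (Fin p)))⟫ = if j = j₀ then 0 else 1 := by
    intro j
    rw [hw_eval, ← hBj j]
    have : ∀ j' ∈ Finset.univ.erase j₀, (B.repr (B j)) j' = if j' = j then 1 else 0 := by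
      intro j' _
      rw [B.repr_self]
      simp [Finsupp.single_apply, eq_comm]
    rw [Finset.sum_congr rfl this, Finset.sum_ite_eq' (Finset.univ.erase j₀) j (fun _ => (1:ℝ))]
    by_cases h : j = j₀
    · simp [h]
    · simp [h, Finset.mem_erase]
  have hv₀0 : v₀ ≠ 0 := by
    intro h0
    have h1 := hv₀_on j₀
    rw [h0, inner_zero_left] at h1
    simp at h1
  -- the distinguished index set
  set ι : Finset (Fin n) := (Finset.univ.erase j₀).image idx with hι
  have hιv : ∀ i ∈ ι, ⟪v₀, X i - x⟫ = 0 := by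
    intro i hi
    obtain ⟨j, hj, rfl⟩ := Finset.mem_image.mp hi
    have hjne : j ≠ j₀ := (Finset.mem_erase.mp hj).1
    have : X (idx j) - x = (j : (EuclideanSpace ℝ (Fin p))) := hidx_spec j
    rw [this, hv₀_on]
    simp [hjne]
  have hιw : ∀ i ∈ ι, ⟪w, X i - x⟫ = 1 := by
    intro i hi
    obtain ⟨j, hj, rfl⟩ := Finset.mem_image.mp hi
    have hjne : j ≠ j₀ := (Finset.mem_erase.mp hj).1
    have : X (idx j) - x = (j : (EuclideanSpace ℝ (Fin p))) := hidx_spec j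
    rw [this, hw_on]
    simp [hjne]
  have hιcard : ι.card + 1 = p := by
    rw [hι, Finset.card_image_of_injective _ hidx_inj,
      Finset.card_erase_of_mem (Finset.mem_univ _), Finset.card_univ, hcards]
    omega
  -- hyperplane cardinality bound from general position
  have hzv : ∀ v' : (EuclideanSpace ℝ (Fin p)), v' ≠ 0 →
      (Finset.univ.filter (fun i => ⟪v', X i - x⟫ = 0)).card ≤ p := by
    intro v' hv'
    have hcard := hgp v' hv' ⟪v', x⟫
    rw [natcard_subtype] at hcard
    have heq2 : (Finset.univ.filter (fun i => ⟪v', X i - x⟫ = 0)) =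
        (Finset.univ.filter (fun i => ⟪v', X i⟫ = ⟪v', x⟫)) := by
      apply Finset.filter_congr
      intro i _
      rw [inner_sub_right, sub_eq_zero]
    rw [heq2]
    exact hcard
  have hy₀v : ⟪v₀, (j₀ : (EuclideanSpace ℝ (Fin p)))⟫ = 1 := by rw [hv₀_on]; simp
  have hy₀w : ⟪w, (j₀ : (EuclideanSpace ℝ (Fin p)))⟫ = 0 := by rw [hw_on]; simp
  -- main construction, with orientation chosen by balance
  have hmain : ∃ u : (EuclideanSpace ℝ (Fin p)), u ≠ 0 ∧ depthCount X u x ≤ (n - p + 2) / 2 := by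
    rcases le_total ((Finset.univ.filter (fun i => ⟪v₀, X i - x⟫ < 0)).card)
        ((Finset.univ.filter (fun i => 0 < ⟪v₀, X i - x⟫)).card) with hbal | hbal
    · exact core_halfspace hp hn X x v₀ w (j₀ : (EuclideanSpace ℝ (Fin p)))
        (by rw [hy₀v]; norm_num) hy₀w ι hιv hιw hιcard (hzv v₀ hv₀0) hbal
    · have hneg_v : ∀ y : (EuclideanSpace ℝ (Fin p)), ⟪-v₀, y⟫ = -⟪v₀, y⟫ := fun y => inner_neg_left _ _
      have e1 : (Finset.univ.filter (fun i => ⟪-v₀, X i - x⟫ < 0)) =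
          (Finset.univ.filter (fun i => 0 < ⟪v₀, X i - x⟫)) := by
        apply Finset.filter_congr
        intro i _
        rw [hneg_v]
        constructor
        · intro h; linarith
        · intro h; linarith
      have e2 : (Finset.univ.filter (fun i => 0 < ⟪-v₀, X i - x⟫)) =
          (Finset.univ.filter (fun i => ⟪v₀, X i - x⟫ < 0)) := by
        apply Finset.filter_congr
        intro i _
        rw [hneg_v]
        constructor
        · intro h; linarith
        · intro h; linarith
      have e3 : (Finset.univ.filter (fun i => ⟪-v₀, X i - x⟫ = 0)) =
          (Finset.univ.filter (fun i => ⟪v₀, X i - x⟫ = 0)) := by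
        apply Finset.filter_congr
        intro i _
        rw [hneg_v]
        constructor
        · intro h; linarith
        · intro h; linarith
      refine core_halfspace hp hn X x (-v₀) w (j₀ : (EuclideanSpace ℝ (Fin p))) ?_ hy₀w ι ?_ hιw hιcard ?_ ?_
      · rw [hneg_v, hy₀v]; norm_num
      · intro i hi; rw [hneg_v, hιv i hi]; ring
      · rw [e3]; exact hzv v₀ hv₀0
      · rw [e1, e2]; exact hbal
  obtain ⟨u, hu0, hC⟩ := hmain
  -- conclude
  have hsInf : sInf {k : ℕ | ∃ u' : (EuclideanSpace ℝ (Fin p)), u' ≠ 0 ∧ k = depthCount X u' x} ≤ (n - p + 2) / 2 :=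
    le_trans (Nat.sInf_le ⟨u, hu0, rfl⟩) hC
  rw [tukeyDepth]
  have hnpos : (0:ℝ) < (n : ℝ) := by
    have : 0 < n := by omega
    exact_mod_cast this
  apply (div_le_div_iff_of_pos_right hnpos).mpr
  exact_mod_cast hsInf

/-- If `Xⁿ` is in general position and the median region has affine dimension `< p`,
then `λ* ≤ ⌊(n - p + 2)/2⌋ / n`. -/
theorem maxDepth_le_of_lowDim {p n : ℕ} (hp : 1 ≤ p) (hn : p < n)
    (X : Fin n → EuclideanSpace ℝ (Fin p))
    (hgp : InGeneralPosition X)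
    (hdim : Module.finrank ℝ (affineSpan ℝ (medianRegion X)).direction < p) :
    maxDepth X ≤ ((n - p + 2) / 2 : ℕ) / (n : ℝ) := by
  rw [maxDepth]
  exact ciSup_le (fun x => tukeyDepth_le_of_gp hp hn X hgp x)
end

section
/- Suppose the data set X^n in ℝ^p (with n > p ≥ 1) is in general position. Then, regardless of the dimension of the Tukey median region, the maximum Tukey depth satisfies λ* ≤ ⌊(n − p + 2)/2⌋ / n. -/
open scoped RealInnerProductSpace

open Finset Module

/-- counting filtered attach -/
private lemma card_attach_filter {α : Type*} (T : Finset α) (P : α → Prop) [DecidablePred P] :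
    (Finset.univ.filter fun i : {x // x ∈ T} => P ↑i).card = (T.filter P).card := by
  classical
  rw [Finset.univ_eq_attach, Finset.filter_attach, Finset.card_map, Finset.card_attach]

/-- perturbation lemma: tilting the hyperplane with normal `u₁` slightly towards `v` -/
private lemma perturb_count {E : Type} [NormedAddCommGroup E] [InnerProductSpace ℝ E]
    {ι : Type} [Fintype ι] (w : ι → E) (u₁ v : E) :
    ∃ δ : ℝ, 0 < δ ∧ (Finset.univ.filter fun i => (inner ℝ (u₁ + δ • v) (w i) : ℝ) ≤ 0).card ≤
      (Finset.univ.filter fun i => (inner ℝ u₁ (w i) : ℝ) < 0).card +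
      ((Finset.univ.filter fun i => (inner ℝ u₁ (w i) : ℝ) = 0).filter
        fun i => (inner ℝ v (w i) : ℝ) ≤ 0).card := by
  classical
  set offs : Finset ι := Finset.univ.filter (fun i => (inner ℝ u₁ (w i) : ℝ) ≠ 0) with hoffs
  set A : ℝ := (insert (1:ℝ) (offs.image fun i => |(inner ℝ u₁ (w i) : ℝ)|)).min' (by simp) with hA
  set B : ℝ := (insert (0:ℝ) (Finset.univ.image fun i => |(inner ℝ v (w i) : ℝ)|)).max' (by simp)
    with hB
  have hApos : 0 < A := by
    have hmem := Finset.min'_mem (insert (1:ℝ) (offs.image fun i => |(inner ℝ u₁ (w i) : ℝ)|))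
      (by simp)
    rw [← hA] at hmem
    rcases Finset.mem_insert.mp hmem with h | h
    · rw [h]; norm_num
    · obtain ⟨i, hi, hAi⟩ := Finset.mem_image.mp h
      have hne : (inner ℝ u₁ (w i) : ℝ) ≠ 0 := by simpa [hoffs] using hi
      rw [← hAi]
      positivity
  have hAle : ∀ i, (inner ℝ u₁ (w i) : ℝ) ≠ 0 → A ≤ |(inner ℝ u₁ (w i) : ℝ)| := by
    intro i hi
    apply Finset.min'_le
    exact Finset.mem_insert_of_mem (Finset.mem_image_of_mem _ (by simp [hoffs, hi]))
  have hBle : ∀ i, |(inner ℝ v (w i) : ℝ)| ≤ B := by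
    intro i
    apply Finset.le_max'
    exact Finset.mem_insert_of_mem (Finset.mem_image_of_mem _ (by simp))
  have hB0 : 0 ≤ B := Finset.le_max' _ _ (Finset.mem_insert_self _ _)
  have hδpos : 0 < A / (B + 1) := by positivity
  refine ⟨A / (B + 1), hδpos, ?_⟩
  set δ : ℝ := A / (B + 1) with hδ
  have hsmall : ∀ i, (inner ℝ u₁ (w i) : ℝ) ≠ 0 →
      δ * |(inner ℝ v (w i) : ℝ)| < |(inner ℝ u₁ (w i) : ℝ)| := by
    intro i hi
    have h1 : δ * |(inner ℝ v (w i) : ℝ)| ≤ δ * B :=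
      mul_le_mul_of_nonneg_left (hBle i) hδpos.le
    have h2 : δ * B < A := by
      rw [hδ, div_mul_eq_mul_div, div_lt_iff₀ (by positivity)]
      nlinarith
    exact (h1.trans_lt h2).trans_le (hAle i hi)
  refine le_trans (Finset.card_le_card ?_) (Finset.card_union_le _ _)
  intro i hi
  have hin : (inner ℝ (u₁ + δ • v) (w i) : ℝ) = inner ℝ u₁ (w i) + δ * inner ℝ v (w i) := by
    rw [inner_add_left, real_inner_smul_left]
  simp only [Finset.mem_filter, Finset.mem_union, Finset.mem_univ, true_and] at hi ⊢
  rw [hin] at hi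
  rcases lt_trichotomy (inner ℝ u₁ (w i) : ℝ) 0 with h | h | h
  · exact Or.inl h
  · refine Or.inr ⟨h, ?_⟩
    rw [h, zero_add] at hi
    nlinarith
  · exfalso
    have hs := hsmall i h.ne'
    rw [abs_of_pos h] at hs
    nlinarith [neg_abs_le (inner ℝ v (w i) : ℝ), hδpos.le,
      mul_le_mul_of_nonneg_left (neg_abs_le (inner ℝ v (w i) : ℝ)) hδpos.le]

private lemma key_lemma (d : ℕ) :
    ∀ (E : Type) [NormedAddCommGroup E] [InnerProductSpace ℝ E],
      Module.finrank ℝ E = d + 1 →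
      ∀ (ι : Type) [Fintype ι] (w : ι → E), d + 1 < Fintype.card ι →
        (∀ u : E, u ≠ 0 →
          (Finset.univ.filter fun i => (inner ℝ u (w i) : ℝ) = 0).card ≤ d + 1) →
        ∃ u : E, u ≠ 0 ∧ (Finset.univ.filter fun i => (inner ℝ u (w i) : ℝ) ≤ 0).card ≤
          (Fintype.card ι - (d + 1) + 2) / 2 := by
  induction d with
  | zero =>
    intro E _ _ hrank ι _ w hm hgp
    classical
    have : Nontrivial E := Module.nontrivial_of_finrank_pos (R := ℝ) (by rw [hrank]; norm_num)
    obtain ⟨u, hu⟩ := exists_ne (0 : E)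
    have hneg : (Finset.univ.filter fun i => (inner ℝ (-u) (w i) : ℝ) ≤ 0)
        = Finset.univ.filter fun i => 0 ≤ (inner ℝ u (w i) : ℝ) := by
      apply Finset.filter_congr
      intro i _
      rw [inner_neg_left]
      exact neg_nonpos
    have hsum : (Finset.univ.filter fun i => (inner ℝ u (w i) : ℝ) ≤ 0).card
        + (Finset.univ.filter fun i => (inner ℝ (-u) (w i) : ℝ) ≤ 0).card
        = Fintype.card ι + (Finset.univ.filter fun i => (inner ℝ u (w i) : ℝ) = 0).card := by
      rw [hneg]
      have h1 : (Finset.univ.filter fun i => (inner ℝ u (w i) : ℝ) ≤ 0)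
          ∪ (Finset.univ.filter fun i => 0 ≤ (inner ℝ u (w i) : ℝ)) = Finset.univ := by
        ext i
        simp only [Finset.mem_union, Finset.mem_filter, Finset.mem_univ, true_and, iff_true]
        exact le_total _ _
      have h2 : (Finset.univ.filter fun i => (inner ℝ u (w i) : ℝ) ≤ 0)
          ∩ (Finset.univ.filter fun i => 0 ≤ (inner ℝ u (w i) : ℝ))
          = Finset.univ.filter fun i => (inner ℝ u (w i) : ℝ) = 0 := by
        ext i
        simp only [Finset.mem_inter, Finset.mem_filter, Finset.mem_univ, true_and]
        constructor
        · rintro ⟨ha, hb⟩; exact le_antisymm ha hb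
        · intro h; exact ⟨le_of_eq h, ge_of_eq h⟩
      rw [← Finset.card_union_add_card_inter, h1, h2, Finset.card_univ]
    have hle := hgp u hu
    rcases le_or_gt ((Finset.univ.filter fun i => (inner ℝ u (w i) : ℝ) ≤ 0).card)
      ((Fintype.card ι - (0 + 1) + 2) / 2) with h | h
    · exact ⟨u, hu, h⟩
    · exact ⟨-u, neg_ne_zero.mpr hu, by omega⟩
  | succ d IH =>
    intro E _ _ hrank ι _ w hm hgp
    classical
    haveI : FiniteDimensional ℝ E := Module.finite_of_finrank_pos (by rw [hrank]; omega)
    haveI : Nonempty ι := Fintype.card_pos_iff.mp (by omega)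
    -- span of the points is everything
    have hspan : Submodule.span ℝ (Set.range w) = ⊤ := by
      by_contra hne
      have hbot : (Submodule.span ℝ (Set.range w))ᗮ ≠ ⊥ := by
        intro hbot
        apply hne
        have h := Submodule.orthogonal_orthogonal (Submodule.span ℝ (Set.range w))
        rw [hbot, Submodule.bot_orthogonal_eq_top] at h
        exact h.symm
      obtain ⟨u, humem, hu⟩ := Submodule.exists_mem_ne_zero_of_ne_bot hbot
      have hall : (Finset.univ.filter fun i => (inner ℝ u (w i) : ℝ) = 0) = Finset.univ := by
        apply Finset.filter_true_of_mem
        intro i _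
        have h := (Submodule.mem_orthogonal _ u).mp humem (w i)
          (Submodule.subset_span (Set.mem_range_self i))
        rwa [real_inner_comm] at h
      have hcon := hgp u hu
      rw [hall, Finset.card_univ] at hcon
      omega
    -- independent spanning subset
    obtain ⟨t, hts, htspan, htind⟩ := exists_linearIndependent ℝ (Set.range w)
    rw [hspan] at htspan
    have htfin : t.Finite := htind.setFinite
    haveI := htfin.fintype
    have hcardtF : t.toFinset.card = d + 2 := by
      have h1 := finrank_span_set_eq_card htind
      rw [htspan, finrank_top, hrank] at h1
      omega
    have htFne : t.toFinset.Nonempty := by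
      rw [← Finset.card_pos, hcardtF]; omega
    obtain ⟨x₀, hx₀⟩ := htFne
    set sF := t.toFinset.erase x₀ with hsF
    have hcards : sF.card = d + 1 := by
      rw [hsF, Finset.card_erase_of_mem hx₀, hcardtF]
      omega

    have hsSub : (↑sF : Set E) ⊆ t := by
      intro y hy
      have h := Finset.mem_of_mem_erase (Finset.mem_coe.mp hy)
      rwa [Set.mem_toFinset] at h
    have hsind : LinearIndepOn ℝ id (↑sF : Set E) := LinearIndepOn.mono htind hsSub
    set H := Submodule.span ℝ (↑sF : Set E) with hH
    have hrankH : Module.finrank ℝ H = d + 1 := by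
      rw [hH, finrank_span_set_eq_card hsind, Finset.toFinset_coe, hcards]
    have hrankHo : Module.finrank ℝ Hᗮ = 1 := by
      have h := Submodule.finrank_add_finrank_orthogonal H
      rw [hrankH, hrank] at h
      omega
    obtain ⟨u₀, hu₀mem, hu₀⟩ := Submodule.exists_mem_ne_zero_of_ne_bot (p := Hᗮ) (by
      intro hbot
      rw [hbot, finrank_bot] at hrankHo
      omega)
    have hspanHo : (ℝ ∙ u₀) = Hᗮ := by
      apply Submodule.eq_of_le_of_finrank_le
      · rwa [Submodule.span_singleton_le_iff_mem]
      · rw [hrankHo, finrank_span_singleton hu₀]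
    have hmemH : ∀ y : E, (inner ℝ u₀ y : ℝ) = 0 ↔ y ∈ H := by
      intro y
      constructor
      · intro h
        have h2 : y ∈ (ℝ ∙ u₀)ᗮ := Submodule.mem_orthogonal_singleton_iff_inner_right.mpr h
        rwa [hspanHo, Submodule.orthogonal_orthogonal] at h2
      · intro h
        exact (Submodule.mem_orthogonal' H u₀).mp hu₀mem y h
    set T : Finset ι := Finset.univ.filter (fun i => (inner ℝ u₀ (w i) : ℝ) = 0) with hT
    have hkle : T.card ≤ d + 2 := by rw [hT]; exact hgp u₀ hu₀
    have hex : ∀ y : E, ∃ i : ι, y ∈ sF → w i = y := by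
      intro y
      by_cases hy : y ∈ sF
      · have h1 : y ∈ Set.range w := hts (hsSub (Finset.mem_coe.mpr hy))
        obtain ⟨i, hi⟩ := h1
        exact ⟨i, fun _ => hi⟩
      · exact ⟨Classical.arbitrary ι, fun h => absurd h hy⟩
    choose f hf using hex
    have hfmaps : ∀ y ∈ sF, f y ∈ T := by
      intro y hy
      rw [hT, Finset.mem_filter]
      refine ⟨Finset.mem_univ _, ?_⟩
      rw [hf y hy]
      exact (hmemH y).mpr (Submodule.subset_span (Finset.mem_coe.mpr hy))
    have hfinj : Set.InjOn f sF := by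
      intro y1 h1 y2 h2 heq
      rw [← hf y1 (Finset.mem_coe.mp h1), ← hf y2 (Finset.mem_coe.mp h2), heq]
    have hkge : d + 1 ≤ T.card := by
      rw [← hcards]
      exact Finset.card_le_card_of_injOn f hfmaps hfinj
    -- find the tilting direction v
    have hvex : ∃ v : E,
        (T.filter fun i => (inner ℝ v (w i) : ℝ) ≤ 0).card ≤ T.card - (d + 1) := by
      rcases eq_or_lt_of_le hkge with hk | hk
      · -- T.card = d + 1 : points on the hyperplane are linearly independent
        have himg : sF.image f = T := by
          apply Finset.eq_of_subset_of_card_le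
          · intro i hi
            obtain ⟨y, hy, rfl⟩ := Finset.mem_image.mp hi
            exact hfmaps y hy
          · rw [Finset.card_image_of_injOn hfinj, hcards, ← hk]
        have hwmem : ∀ i ∈ T, w i ∈ sF := by
          intro i hi
          rw [← himg] at hi
          obtain ⟨y, hy, rfl⟩ := Finset.mem_image.mp hi
          rw [hf y hy]
          exact hy
        set φ : E →ₗ[ℝ] ℝ := (Basis.extend hsind).constr ℝ
          (fun j => if (j : E) ∈ sF then (1:ℝ) else 0) with hφ
        have hφy : ∀ y ∈ sF, φ y = 1 := by
          intro y hy
          have hyt : y ∈ hsind.extend (Set.subset_univ _) :=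
            hsind.subset_extend _ (Finset.mem_coe.mpr hy)
          have h1 : φ ((Basis.extend hsind) ⟨y, hyt⟩)
              = if ((⟨y, hyt⟩ : hsind.extend (Set.subset_univ _)) : E) ∈ sF then (1:ℝ) else 0 :=
            Basis.constr_basis _ _ _ _
          rw [Basis.extend_apply_self] at h1
          rw [h1]
          simp [hy]
        set v : E := (InnerProductSpace.toDual ℝ E).symm
          (LinearMap.toContinuousLinearMap φ) with hv
        have hvy : ∀ y ∈ sF, (inner ℝ v y : ℝ) = 1 := by
          intro y hy
          rw [hv, InnerProductSpace.toDual_symm_apply]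
          rw [LinearMap.coe_toContinuousLinearMap']
          exact hφy y hy
        refine ⟨v, ?_⟩
        have hempty : (T.filter fun i => (inner ℝ v (w i) : ℝ) ≤ 0) = ∅ := by
          rw [Finset.filter_eq_empty_iff]
          intro i hi
          rw [hvy (w i) (hwmem i hi)]
          norm_num
        rw [hempty]
        simp
      · -- T.card = d + 2 : use the induction hypothesis inside H
        have hkeq : T.card = d + 2 := le_antisymm hkle hk
        have hcardιT : Fintype.card {i : ι // i ∈ T} = d + 2 := by
          rw [Fintype.card_coe, hkeq]
        set wT : {i : ι // i ∈ T} → H := fun i => ⟨w i.1, (hmemH _).mp (by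
          have h := i.2
          simp only [hT, Finset.mem_filter] at h
          exact h.2)⟩ with hwT
        have hgpT : ∀ v : H, v ≠ 0 →
            (Finset.univ.filter fun i : {i : ι // i ∈ T} =>
              (inner ℝ v (wT i) : ℝ) = 0).card ≤ d + 1 := by
          intro v hv
          by_contra hcon
          push_neg at hcon
          have hfull : (Finset.univ.filter fun i : {i : ι // i ∈ T} =>
              (inner ℝ v (wT i) : ℝ) = 0) = Finset.univ := by
            apply Finset.eq_univ_of_card
            have h1 := Finset.card_filter_le (Finset.univ : Finset {i : ι // i ∈ T})
              (fun i => (inner ℝ v (wT i) : ℝ) = 0)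
            rw [Finset.card_univ] at h1
            omega
          have hallT : ∀ i (hi : i ∈ T), (inner ℝ (v : E) (w i) : ℝ) = 0 := by
            intro i hi
            have h1 : (⟨i, hi⟩ : {i : ι // i ∈ T}) ∈ Finset.univ.filter
                fun i : {i : ι // i ∈ T} => (inner ℝ v (wT i) : ℝ) = 0 := by
              rw [hfull]; exact Finset.mem_univ _
            rw [Finset.mem_filter] at h1
            have h2 := h1.2
            rwa [hwT, Submodule.coe_inner] at h2
          have hTne : T ≠ Finset.univ := by
            intro h
            rw [h, Finset.card_univ] at hkeq
            omega
          obtain ⟨j, hj⟩ : ∃ j, j ∉ T := by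
            by_contra hcon2
            push_neg at hcon2
            exact hTne (Finset.eq_univ_iff_forall.mpr hcon2)
          have haj : (inner ℝ u₀ (w j) : ℝ) ≠ 0 := by
            intro h
            exact hj (by rw [hT, Finset.mem_filter]; exact ⟨Finset.mem_univ _, h⟩)
          set u' : E := (inner ℝ u₀ (w j) : ℝ) • (v : E) - (inner ℝ (v : E) (w j) : ℝ) • u₀ with hu'
          have hu'ne : u' ≠ 0 := by
            intro h
            have heq : (inner ℝ u₀ (w j) : ℝ) • (v : E) = (inner ℝ (v : E) (w j) : ℝ) • u₀ := by
              rwa [hu', sub_eq_zero] at h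
            have hmem1 : (inner ℝ u₀ (w j) : ℝ) • (v : E) ∈ H := H.smul_mem _ v.2
            have hmem2 : (inner ℝ u₀ (w j) : ℝ) • (v : E) ∈ Hᗮ := by
              rw [heq]; exact Hᗮ.smul_mem _ hu₀mem
            have hb := (Submodule.orthogonal_disjoint H).le_bot
              (Submodule.mem_inf.mpr ⟨hmem1, hmem2⟩)
            rw [Submodule.mem_bot] at hb
            rcases smul_eq_zero.mp hb with h1 | h1
            · exact haj h1
            · exact hv (Subtype.ext h1)
          have hcount := hgp u' hu'ne
          have hsub : insert j T ⊆ Finset.univ.filter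
              fun i => (inner ℝ u' (w i) : ℝ) = 0 := by
            intro i hi
            rw [Finset.mem_filter]
            refine ⟨Finset.mem_univ _, ?_⟩
            rw [hu', inner_sub_left, real_inner_smul_left, real_inner_smul_left]
            rcases Finset.mem_insert.mp hi with h | h
            · subst h; ring
            · have h2 : (inner ℝ u₀ (w i) : ℝ) = 0 := by
                rw [hT, Finset.mem_filter] at h; exact h.2
              rw [hallT i h, h2]; ring
          have hcard2 := Finset.card_le_card hsub
          rw [Finset.card_insert_of_notMem hj] at hcard2
          omega
        obtain ⟨v, hv, hvcount⟩ := IH H hrankH {i : ι // i ∈ T} wT (by omega) hgpT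
        refine ⟨(v : E), ?_⟩
        have htrans : (Finset.univ.filter fun i : {i : ι // i ∈ T} =>
            (inner ℝ v (wT i) : ℝ) ≤ 0).card
            = (T.filter fun i => (inner ℝ (v : E) (w i) : ℝ) ≤ 0).card := by
          rw [← card_attach_filter T (fun i => (inner ℝ (v : E) (w i) : ℝ) ≤ 0)]
          congr 1
        rw [← htrans]
        omega
    obtain ⟨v, hvcnt⟩ := hvex
    -- choose orientation of u₀
    obtain ⟨u₁, hN1, hT1⟩ : ∃ u₁ : E,
        2 * (Finset.univ.filter fun i => (inner ℝ u₁ (w i) : ℝ) < 0).card + T.card ≤ Fintype.card ι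
        ∧ (Finset.univ.filter fun i => (inner ℝ u₁ (w i) : ℝ) = 0) = T := by
      set N := Finset.univ.filter (fun i => (inner ℝ u₀ (w i) : ℝ) < 0) with hN
      set P := Finset.univ.filter (fun i => (0:ℝ) < inner ℝ u₀ (w i)) with hP
      have h1 : N ∪ P ∪ T = Finset.univ := by
        ext i
        simp only [Finset.mem_union, hN, hP, hT, Finset.mem_filter, Finset.mem_univ,
          true_and, iff_true]
        rcases lt_trichotomy (inner ℝ u₀ (w i) : ℝ) 0 with h | h | h
        · exact Or.inl (Or.inl h)
        · exact Or.inr h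
        · exact Or.inl (Or.inr h)
      have hd1 : Disjoint N P := by
        rw [Finset.disjoint_left]
        intro i hi1 hi2
        rw [hN, Finset.mem_filter] at hi1
        rw [hP, Finset.mem_filter] at hi2
        exact absurd (hi1.2.trans hi2.2) (lt_irrefl _)
      have hd2 : Disjoint (N ∪ P) T := by
        rw [Finset.disjoint_left]
        intro i hi1 hi2
        rw [hT, Finset.mem_filter] at hi2
        rcases Finset.mem_union.mp hi1 with h | h
        · rw [hN, Finset.mem_filter] at h
          exact absurd hi2.2 (ne_of_lt h.2)
        · rw [hP, Finset.mem_filter] at h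
          exact absurd hi2.2 (ne_of_gt h.2)
      have hNPT : N.card + P.card + T.card = Fintype.card ι := by
        rw [← Finset.card_univ, ← h1, Finset.card_union_of_disjoint hd2,
          Finset.card_union_of_disjoint hd1]
      rcases le_total N.card P.card with hor | hor
      · refine ⟨u₀, ?_, rfl⟩
        rw [← hN]
        omega
      · refine ⟨-u₀, ?_, ?_⟩
        · have hPeq : (Finset.univ.filter fun i => (inner ℝ (-u₀) (w i) : ℝ) < 0) = P := by
            rw [hP]
            apply Finset.filter_congr
            intro i _
            rw [inner_neg_left]
            exact neg_lt_zero
          rw [hPeq]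
          omega
        · rw [hT]
          apply Finset.filter_congr
          intro i _
          rw [inner_neg_left]
          exact neg_eq_zero
    obtain ⟨δ, hδpos, hcount⟩ := perturb_count w u₁ v
    have hcnt2 : ((Finset.univ.filter fun i => (inner ℝ u₁ (w i) : ℝ) = 0).filter
        fun i => (inner ℝ v (w i) : ℝ) ≤ 0).card ≤ T.card - (d + 1) := by
      rw [hT1]
      exact hvcnt
    have hfinal : (Finset.univ.filter fun i => (inner ℝ (u₁ + δ • v) (w i) : ℝ) ≤ 0).card ≤
        (Fintype.card ι - (d + 1 + 1) + 2) / 2 := by omega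
    refine ⟨u₁ + δ • v, ?_, hfinal⟩
    intro h0
    rw [h0] at hfinal
    have hzero : (Finset.univ.filter fun i => (inner ℝ (0:E) (w i) : ℝ) ≤ 0) = Finset.univ := by
      apply Finset.filter_true_of_mem
      intro i _
      rw [inner_zero_left]
    rw [hzero, Finset.card_univ] at hfinal
    omega

/-- If `Xⁿ` is in general position then `λ* ≤ ⌊(n - p + 2)/2⌋ / n`. -/
theorem maxDepth_le {p n : ℕ} (hp : 1 ≤ p) (hn : p < n)
    (X : Fin n → EuclideanSpace ℝ (Fin p))
    (hgp : InGeneralPosition X) :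
    maxDepth X ≤ ((n - p + 2) / 2 : ℕ) / (n : ℝ) := by
  classical
  have hp1 : p - 1 + 1 = p := Nat.succ_pred_eq_of_pos hp
  have hnpos : (0:ℝ) < n := by
    have : 0 < n := by omega
    exact_mod_cast this
  apply ciSup_le
  intro x
  rw [tukeyDepth, div_le_div_iff_of_pos_right hnpos]
  rw [Nat.cast_le]
  have hkey := key_lemma (p - 1) (EuclideanSpace ℝ (Fin p))
    (by rw [finrank_euclideanSpace_fin]; omega)
    (Fin n) (fun i => X i - x) (by rw [Fintype.card_fin]; omega)
    (by
      intro u hu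
      have hb := hgp u hu (inner ℝ u x)
      have heq : (Finset.univ.filter fun i : Fin n => (inner ℝ u (X i - x) : ℝ) = 0).card
          = Nat.card {i : Fin n // ⟪u, X i⟫ = ⟪u, x⟫} := by
        rw [Nat.card_eq_fintype_card, Fintype.card_subtype]
        congr 1
        apply Finset.filter_congr
        intro i _
        rw [inner_sub_right, sub_eq_zero]
      rw [heq]
      omega)
  obtain ⟨u, hu, hcard⟩ := hkey
  refine le_trans (Nat.sInf_le ⟨u, hu, rfl⟩) ?_
  have heq2 : depthCount X u x
      = (Finset.univ.filter fun i : Fin n => (inner ℝ u (X i - x) : ℝ) ≤ 0).card := by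
    rw [depthCount, Nat.card_eq_fintype_card, Fintype.card_subtype]
    congr 1
    apply Finset.filter_congr
    intro i _
    rw [inner_sub_right, sub_nonpos]
  rw [heq2]
  rw [Fintype.card_fin, hp1] at hcard
  exact hcard
end

section
/- Suppose p ≥ 3, n > p, and the data set X^n in ℝ^p is in general position. Then X^n is not halfspace symmetric about any point: there is no θ ∈ ℝ^p such that for every nonzero u ∈ ℝ^p, #{i ∈ {1,…,n} : ⟨u, X_i⟩ ≤ ⟨u, θ⟩} ≥ n/2. In other words, 'in general position' and 'halfspace symmetry' cannot coexist for a data set in ℝ^p with p ≥ 3. -/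
open scoped RealInnerProductSpace

private lemma exists_eps_aux {n : ℕ} (d ev : Fin n → ℝ) :
    ∃ ε : ℝ, 0 < ε ∧ ∀ i : Fin n, d i ≠ 0 → ε * |ev i| < |d i| := by
  classical
  rcases Finset.eq_empty_or_nonempty (Finset.univ.filter (fun i : Fin n => d i ≠ 0)) with hF | hF
  · refine ⟨1, one_pos, fun i hi => ?_⟩
    exfalso
    have hmem : i ∈ Finset.univ.filter (fun i : Fin n => d i ≠ 0) := by simp [hi]
    rw [hF] at hmem
    exact absurd hmem (Finset.notMem_empty i)
  · refine ⟨(Finset.univ.filter (fun i : Fin n => d i ≠ 0)).inf' hF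
      (fun i => |d i| / (|ev i| + 1)), ?_, ?_⟩
    · rw [Finset.lt_inf'_iff]
      intro i hiF
      simp only [Finset.mem_filter, Finset.mem_univ, true_and] at hiF
      exact div_pos (abs_pos.mpr hiF) (by positivity)
    · intro i hi
      have hmem : i ∈ Finset.univ.filter (fun i : Fin n => d i ≠ 0) := by simp [hi]
      have hle := Finset.inf'_le (fun i => |d i| / (|ev i| + 1)) hmem
      have hη0 : 0 < (Finset.univ.filter (fun i : Fin n => d i ≠ 0)).inf' hF
          (fun i => |d i| / (|ev i| + 1)) := by
        rw [Finset.lt_inf'_iff]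
        intro k hkF
        simp only [Finset.mem_filter, Finset.mem_univ, true_and] at hkF
        exact div_pos (abs_pos.mpr hkF) (by positivity)
      set η := (Finset.univ.filter (fun i : Fin n => d i ≠ 0)).inf' hF
        (fun i => |d i| / (|ev i| + 1)) with hηdef
      have hpos : (0:ℝ) < |ev i| + 1 := by positivity
      have h6 : η * (|ev i| + 1) ≤ |d i| :=
        calc η * (|ev i| + 1) ≤ (|d i| / (|ev i| + 1)) * (|ev i| + 1) :=
              mul_le_mul_of_nonneg_right hle (le_of_lt hpos)
          _ = |d i| := div_mul_cancel₀ _ (ne_of_gt hpos)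
      nlinarith [abs_nonneg (ev i)]

set_option maxHeartbeats 2000000 in
/-- For `p ≥ 3`, a data set in general position cannot be halfspace symmetric
about any point. -/
theorem not_halfspaceSymmetric_of_inGeneralPosition {p n : ℕ} (hp : 3 ≤ p) (hn : p < n)
    (X : Fin n → EuclideanSpace ℝ (Fin p))
    (hgp : InGeneralPosition X) :
    ¬ ∃ θ : EuclideanSpace ℝ (Fin p), ∀ u : EuclideanSpace ℝ (Fin p), u ≠ 0 →
      (n : ℝ) / 2 ≤ (Nat.card {i : Fin n // ⟪u, X i⟫ ≤ ⟪u, θ⟫} : ℝ) := by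
  classical
  replace hgp : ∀ u : EuclideanSpace ℝ (Fin p), u ≠ 0 → ∀ c : ℝ,
      Nat.card {i : Fin n // ⟪u, X i⟫ = c} ≤ p := hgp
  rintro ⟨θ, hθ⟩
  set f : Fin n → EuclideanSpace ℝ (Fin p) := fun i => X i - θ with hfdef
  -- Step 1: the span of the `f i` is everything.
  have hspan : Submodule.span ℝ (Set.range f) = ⊤ := by
    by_contra hne
    have hoB : (Submodule.span ℝ (Set.range f))ᗮ ≠ ⊥ :=
      fun h => hne (Submodule.orthogonal_eq_bot_iff.mp h)
    obtain ⟨u, humem, hu0⟩ := Submodule.exists_mem_ne_zero_of_ne_bot hoB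
    have hall : ∀ i, ⟪u, X i⟫ = ⟪u, θ⟫ := by
      intro i
      have h0 : ⟪u, f i⟫ = 0 :=
        (Submodule.mem_orthogonal' _ u).mp humem (f i)
          (Submodule.subset_span (Set.mem_range_self i))
      have : ⟪u, X i⟫ - ⟪u, θ⟫ = 0 := by
        rw [← inner_sub_right]; exact h0
      linarith
    have hcard : Nat.card {i : Fin n // ⟪u, X i⟫ = ⟪u, θ⟫} = n := by
      rw [Nat.card_eq_fintype_card, Fintype.card_subtype]
      simp [hall]
    have := hgp u hu0 ⟪u, θ⟫
    omega
  -- Step 2: extract p-1 linearly independent vectors among the f i.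
  obtain ⟨s, hsub, hspan2, hli⟩ := exists_linearIndependent ℝ (Set.range f)
  have hsfin : s.Finite := (Set.finite_range f).subset hsub
  haveI : Fintype s := hsfin.fintype
  have hcards : s.toFinset.card = p := by
    have h1 : Module.finrank ℝ (Submodule.span ℝ s) = s.toFinset.card :=
      finrank_span_set_eq_card hli
    rw [hspan2, hspan] at h1
    rw [← h1, finrank_top, finrank_euclideanSpace_fin]
  have hcards' : Fintype.card s = p := by rw [← Set.toFinset_card]; exact hcards
  -- an injection Fin (p-1) → s
  let e : Fin p ≃ s := (Fintype.equivFinOfCardEq hcards').symm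
  let j : Fin (p-1) → s := fun k => e (Fin.castLE (by omega) k)
  have hjinj : Function.Injective j := by
    intro a b hab
    have := e.injective hab
    exact Fin.castLE_injective _ this
  have hli' : LinearIndependent ℝ (fun k : Fin (p-1) => ((j k : EuclideanSpace ℝ (Fin p)))) :=
    hli.comp j hjinj
  have hex : ∀ k : Fin (p-1), ∃ i : Fin n, f i = (j k : EuclideanSpace ℝ (Fin p)) := by
    intro k
    exact Set.mem_range.mp (hsub (j k).2)
  choose g hg using hex
  have hliF : LinearIndependent ℝ (fun k : Fin (p-1) => f (g k)) := by
    have : (fun k : Fin (p-1) => f (g k))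
        = fun k => ((j k : EuclideanSpace ℝ (Fin p))) := funext hg
    rw [this]; exact hli'
  -- Step 3: u ≠ 0 orthogonal to all f (g k)
  set W : Submodule ℝ (EuclideanSpace ℝ (Fin p)) :=
    Submodule.span ℝ (Set.range (fun k : Fin (p-1) => f (g k))) with hWdef
  have hWrank : Module.finrank ℝ W = p - 1 := by
    rw [hWdef, finrank_span_eq_card hliF, Fintype.card_fin]
  have hWne : W ≠ ⊤ := by
    intro h
    rw [h, finrank_top, finrank_euclideanSpace_fin] at hWrank
    omega
  have hWoB : Wᗮ ≠ ⊥ := fun h => hWne (Submodule.orthogonal_eq_bot_iff.mp h)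
  obtain ⟨u, humem, hu0⟩ := Submodule.exists_mem_ne_zero_of_ne_bot hWoB
  have hu_orth : ∀ k, ⟪u, f (g k)⟫ = 0 := by
    intro k
    exact (Submodule.mem_orthogonal' _ u).mp humem (f (g k))
      (Submodule.subset_span (Set.mem_range_self k))
  -- Step 4: v with ⟪v, f (g k)⟫ = 1
  obtain ⟨gl, hgl⟩ := W.subtype.exists_leftInverse_of_injective (Submodule.ker_subtype W)
  set b : Module.Basis (Fin (p-1)) ℝ W := Module.Basis.span hliF with hbdef
  set φ : EuclideanSpace ℝ (Fin p) →ₗ[ℝ] ℝ := (∑ k : Fin (p-1), b.coord k).comp gl with hφdef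
  set v : EuclideanSpace ℝ (Fin p) :=
    (InnerProductSpace.toDual ℝ (EuclideanSpace ℝ (Fin p))).symm
      (LinearMap.toContinuousLinearMap φ) with hvdef
  have hv : ∀ x : EuclideanSpace ℝ (Fin p), ⟪v, x⟫ = φ x := by
    intro x
    rw [hvdef, InnerProductSpace.toDual_symm_apply]
    rfl
  have hvk : ∀ k, ⟪v, f (g k)⟫ = 1 := by
    intro k
    rw [hv]
    have h1 : (b k : EuclideanSpace ℝ (Fin p)) = f (g k) := congrArg Subtype.val (Module.Basis.span_apply hliF k)
    have h2 : gl (f (g k)) = b k := by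
      rw [← h1]
      have := LinearMap.congr_fun hgl (b k)
      simpa using this
    rw [hφdef, LinearMap.comp_apply, h2]
    simp only [LinearMap.coe_sum, Finset.sum_apply, Module.Basis.coord_apply, Module.Basis.repr_self]
    simp [Finsupp.single_apply]
  clear_value b φ v
  clear hv hφdef hvdef hbdef hgl gl φ b
  -- counting setup
  set d : Fin n → ℝ := fun i => ⟪u, f i⟫ with hddef
  set ev : Fin n → ℝ := fun i => ⟪v, f i⟫ with hevdef
  set A := Finset.univ.filter (fun i : Fin n => d i < 0) with hA
  set B := Finset.univ.filter (fun i : Fin n => 0 < d i) with hB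
  set Z := Finset.univ.filter (fun i : Fin n => d i = 0) with hZdef
  set Q := Finset.univ.filter (fun i : Fin n => d i = 0 ∧ 0 < ev i) with hQdef
  clear_value d ev A B Z Q
  have hABZ : A.card + B.card + Z.card = n := by
    have h1 : (Finset.univ.filter (fun i : Fin n => d i = 0)).card
        + (Finset.univ.filter (fun i : Fin n => ¬ d i = 0)).card = n := by
      rw [Finset.card_filter_add_card_filter_not, Finset.card_univ, Fintype.card_fin]
    have h2 : Finset.univ.filter (fun i : Fin n => ¬ d i = 0) = A ∪ B := by
      ext i
      simp only [hA, hB, Finset.mem_filter, Finset.mem_univ, true_and, Finset.mem_union]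
      constructor
      · intro h
        rcases lt_or_gt_of_ne h with h' | h'
        · exact Or.inl h'
        · exact Or.inr h'
      · rintro (h | h)
        · exact ne_of_lt h
        · exact ne_of_gt h
    have h3 : Disjoint A B := by
      rw [Finset.disjoint_left]
      intro i hiA hiB
      simp only [hA, hB, Finset.mem_filter] at hiA hiB
      linarith [hiA.2, hiB.2]
    rw [h2, Finset.card_union_of_disjoint h3, ← hZdef] at h1
    omega
  -- Z has at most p elements by general position
  have hZp : Z.card ≤ p := by
    have hgpu := hgp u hu0 ⟪u, θ⟫
    have hcard : Nat.card {i : Fin n // ⟪u, X i⟫ = ⟪u, θ⟫} = Z.card := by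
      rw [Nat.card_eq_fintype_card, Fintype.card_subtype]
      congr 1
      ext i
      simp only [hZdef, Finset.mem_filter, Finset.mem_univ, true_and, hddef, hfdef]
      rw [inner_sub_right, sub_eq_zero]
    omega
  -- Q has at least p-1 elements
  have hginj : Function.Injective g := by
    intro a b hab
    have hcoe : (j a : EuclideanSpace ℝ (Fin p)) = (j b : EuclideanSpace ℝ (Fin p)) := by
      rw [← hg a, ← hg b, hab]
    exact hjinj (Subtype.coe_injective hcoe)
  have hQp : p - 1 ≤ Q.card := by
    have hle : (Finset.univ : Finset (Fin (p-1))).card ≤ Q.card := by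
      apply Finset.card_le_card_of_injOn g
      · intro k _
        simp only [hQdef, Finset.mem_coe, Finset.mem_filter, Finset.mem_univ, true_and]
        constructor
        · simp only [hddef]; exact hu_orth k
        · simp only [hevdef]; rw [hvk k]; norm_num
      · intro a _ b _ hab
        exact hginj hab
    simpa using hle
  -- key: any open halfspace at θ contains at most n/2 points
  have key : ∀ w : EuclideanSpace ℝ (Fin p), w ≠ 0 →
      2 * (Finset.univ.filter (fun i : Fin n => 0 < ⟪w, f i⟫)).card ≤ n := by
    intro w hw
    have h1 := hθ w hw
    have h2 : Nat.card {i : Fin n // ⟪w, X i⟫ ≤ ⟪w, θ⟫}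
        = (Finset.univ.filter (fun i : Fin n => ¬ 0 < ⟪w, f i⟫)).card := by
      rw [Nat.card_eq_fintype_card, Fintype.card_subtype]
      congr 1
      ext i
      simp only [Finset.mem_filter, Finset.mem_univ, true_and, not_lt, hfdef]
      rw [inner_sub_right]
      constructor <;> intro h <;> linarith
    have h3 : (Finset.univ.filter (fun i : Fin n => 0 < ⟪w, f i⟫)).card
        + (Finset.univ.filter (fun i : Fin n => ¬ 0 < ⟪w, f i⟫)).card = n := by
      rw [Finset.card_filter_add_card_filter_not, Finset.card_univ, Fintype.card_fin]
    rw [h2] at h1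
    have h4 : (n : ℝ) ≤ 2 * ((Finset.univ.filter (fun i : Fin n => ¬ 0 < ⟪w, f i⟫)).card : ℝ) := by
      linarith
    have h5 : n ≤ 2 * (Finset.univ.filter (fun i : Fin n => ¬ 0 < ⟪w, f i⟫)).card := by
      exact_mod_cast h4
    omega
  -- choose ε
  obtain ⟨ε, hε0, hε⟩ := exists_eps_aux d ev
  -- bound for B ∪ Q
  have hw1 : 2 * (B.card + Q.card) ≤ n := by
    set w : EuclideanSpace ℝ (Fin p) := u + ε • v with hwdef
    clear_value w
    have hwinner : ∀ i : Fin n, ⟪w, f i⟫ = d i + ε * ev i := by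
      intro i
      simp only [hwdef, inner_add_left, real_inner_smul_left, hddef, hevdef]
    have hwne : w ≠ 0 := by
      intro h0
      have hk := hwinner (g ⟨0, by omega⟩)
      rw [h0, inner_zero_left] at hk
      have hd0 : d (g ⟨0, by omega⟩) = 0 := by simp only [hddef]; exact hu_orth _
      have he1 : ev (g ⟨0, by omega⟩) = 1 := by simp only [hevdef]; exact hvk _
      rw [hd0, he1] at hk
      linarith
    have hsubB : B ∪ Q ⊆ Finset.univ.filter (fun i : Fin n => 0 < ⟪w, f i⟫) := by
      intro i hi
      simp only [Finset.mem_union, hB, hQdef, Finset.mem_filter, Finset.mem_univ, true_and] at hi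
      simp only [Finset.mem_filter, Finset.mem_univ, true_and, hwinner]
      rcases hi with hi | ⟨hi0, hie⟩
      · have h7 := hε i (ne_of_gt hi)
        have h8 : |d i| = d i := abs_of_pos hi
        have h9 : -(ε * |ev i|) ≤ ε * ev i := by
          have h10 := neg_abs_le (ev i)
          nlinarith
        linarith
      · rw [hi0]
        have := mul_pos hε0 hie
        linarith
    have hdisj : Disjoint B Q := by
      rw [Finset.disjoint_left]
      intro i hiB hiQ
      simp only [hB, hQdef, Finset.mem_filter] at hiB hiQ
      exact absurd hiQ.2.1 (ne_of_gt hiB.2)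
    have hkey := key w hwne
    have hcard := Finset.card_le_card hsubB
    rw [Finset.card_union_of_disjoint hdisj] at hcard
    omega
  -- bound for A ∪ Q
  have hw2 : 2 * (A.card + Q.card) ≤ n := by
    set w : EuclideanSpace ℝ (Fin p) := -u + ε • v with hwdef
    clear_value w
    have hwinner : ∀ i : Fin n, ⟪w, f i⟫ = -d i + ε * ev i := by
      intro i
      simp only [hwdef, inner_add_left, inner_neg_left, real_inner_smul_left, hddef, hevdef]
    have hwne : w ≠ 0 := by
      intro h0
      have hk := hwinner (g ⟨0, by omega⟩)
      rw [h0, inner_zero_left] at hk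
      have hd0 : d (g ⟨0, by omega⟩) = 0 := by simp only [hddef]; exact hu_orth _
      have he1 : ev (g ⟨0, by omega⟩) = 1 := by simp only [hevdef]; exact hvk _
      rw [hd0, he1] at hk
      linarith
    have hsubA : A ∪ Q ⊆ Finset.univ.filter (fun i : Fin n => 0 < ⟪w, f i⟫) := by
      intro i hi
      simp only [Finset.mem_union, hA, hQdef, Finset.mem_filter, Finset.mem_univ, true_and] at hi
      simp only [Finset.mem_filter, Finset.mem_univ, true_and, hwinner]
      rcases hi with hi | ⟨hi0, hie⟩
      · have h7 := hε i (ne_of_lt hi)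
        have h8 : |d i| = -d i := abs_of_neg hi
        have h9 : -(ε * |ev i|) ≤ ε * ev i := by
          have h10 := neg_abs_le (ev i)
          nlinarith
        linarith
      · rw [hi0]
        have := mul_pos hε0 hie
        linarith
    have hdisj : Disjoint A Q := by
      rw [Finset.disjoint_left]
      intro i hiA hiQ
      simp only [hA, hQdef, Finset.mem_filter] at hiA hiQ
      have := hiQ.2.1
      linarith [hiA.2]
    have hkey := key w hwne
    have hcard := Finset.card_le_card hsubA
    rw [Finset.card_union_of_disjoint hdisj] at hcard
    omega
  omega
end

section
/- Suppose the data set X^n in ℝ^p (with n > p ≥ 1) is in general position. If there exists an index l ∈ {1,…,n} such that the sample point X_l attains the maximum Tukey depth, i.e. D(X_l) = λ*, then X_l is an extreme point (a vertex) of the Tukey median region M. -/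
open scoped RealInnerProductSpace

private lemma depthCount_eq_card {p n : ℕ} (X : Fin n → EuclideanSpace ℝ (Fin p))
    (u x : EuclideanSpace ℝ (Fin p)) :
    depthCount X u x = (Finset.univ.filter (fun i => ⟪u, X i⟫ ≤ ⟪u, x⟫)).card := by
  classical
  rw [depthCount, Nat.card_eq_fintype_card, Fintype.card_subtype]
private lemma depthCount_mono {p n : ℕ} (X : Fin n → EuclideanSpace ℝ (Fin p))
    (u v x z : EuclideanSpace ℝ (Fin p))
    (h : ∀ i, ⟪u, X i⟫ ≤ ⟪u, x⟫ → ⟪v, X i⟫ ≤ ⟪v, z⟫) :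
    depthCount X u x ≤ depthCount X v z := by
  classical
  rw [depthCount_eq_card, depthCount_eq_card]
  apply Finset.card_le_card
  intro i hi
  simp only [Finset.mem_filter, Finset.mem_univ, true_and] at hi ⊢
  exact h i hi
private lemma depthCount_lt {p n : ℕ} (X : Fin n → EuclideanSpace ℝ (Fin p))
    (u y : EuclideanSpace ℝ (Fin p)) (l : Fin n) (h : ⟪u, y⟫ < ⟪u, X l⟫) :
    depthCount X u y < depthCount X u (X l) := by
  classical
  rw [depthCount_eq_card, depthCount_eq_card]
  apply Finset.card_lt_card
  constructor
  · intro i hi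
    simp only [Finset.mem_filter, Finset.mem_univ, true_and] at hi ⊢
    exact hi.trans h.le
  · intro hsub
    have hl' := hsub (Finset.mem_filter.mpr ⟨Finset.mem_univ l, le_refl _⟩)
    simp only [Finset.mem_filter, Finset.mem_univ, true_and] at hl'
    exact absurd hl' (not_le.mpr h)
/-- Core contradiction lemma. -/
private lemma no_lower {p n : ℕ} (X : Fin n → EuclideanSpace ℝ (Fin p))
    (l : Fin n) (y v : EuclideanSpace ℝ (Fin p)) (hv : v ≠ 0)
    (hlt : ⟪v, y⟫ < ⟪v, X l⟫) (m : ℕ)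
    (hle : depthCount X v (X l) ≤ m)
    (hy : sInf {k : ℕ | ∃ u : EuclideanSpace ℝ (Fin p), u ≠ 0 ∧ k = depthCount X u y} = m) :
    False := by
  have h1 : m ≤ depthCount X v y := hy ▸ Nat.sInf_le ⟨v, hv, rfl⟩
  have h2 := depthCount_lt X v y l hlt
  omega
/-- Small perturbation of the direction does not increase the count at `X l`. -/
private lemma perturb {p n : ℕ} (hn0 : 0 < n) (X : Fin n → EuclideanSpace ℝ (Fin p))
    (l : Fin n) (v w : EuclideanSpace ℝ (Fin p)) :
    ∃ ε : ℝ, 0 < ε ∧ depthCount X (v + ε • w) (X l) ≤ depthCount X v (X l) := by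
  classical
  set F : Fin n → ℝ := fun i =>
    if h : ⟪w, X i - X l⟫ < 0 ∧ 0 < ⟪v, X i - X l⟫ then
      ⟪v, X i - X l⟫ / (-⟪w, X i - X l⟫) else 1 with hF
  have hne : (Finset.univ : Finset (Fin n)).Nonempty := by
    simpa [Finset.univ_nonempty_iff] using (Fin.pos_iff_nonempty.mp hn0)
  have hFpos : ∀ i, 0 < F i := by
    intro i
    rw [hF]
    dsimp only
    split_ifs with h
    · exact div_pos h.2 (by linarith [h.1])
    · norm_num
  set ε : ℝ := (Finset.univ.inf' hne F) / 2 with hε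
  have hinfpos : 0 < Finset.univ.inf' hne F := by
    rw [Finset.lt_inf'_iff]
    intro i _
    exact hFpos i
  refine ⟨ε, by positivity, ?_⟩
  apply depthCount_mono
  intro i hi
  by_contra hgt
  push_neg at hgt
  set a : ℝ := ⟪v, X i - X l⟫ with ha
  set b : ℝ := ⟪w, X i - X l⟫ with hb
  have hapos : 0 < a := by
    rw [ha, inner_sub_right]; linarith
  have hkey : ⟪v + ε • w, X i⟫ - ⟪v + ε • w, X l⟫ = a + ε * b := by
    rw [ha, hb]
    simp only [inner_add_left, real_inner_smul_left, inner_sub_right]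
    ring
  have : ¬ (0 < a + ε * b) := by
    intro hpos
    have := hi
    linarith [hkey]
  apply this
  by_cases hbsign : 0 ≤ b
  · nlinarith
  · push_neg at hbsign
    have hFi : F i = a / (-b) := by
      rw [hF]; dsimp only
      rw [dif_pos ⟨hbsign, hapos⟩]
  -- ε < F i
    have hεlt : ε < F i := by
      calc ε < Finset.univ.inf' hne F := by rw [hε]; linarith
      _ ≤ F i := Finset.inf'_le F (Finset.mem_univ i)
    rw [hFi] at hεlt
    have : ε * (-b) < a := (lt_div_iff₀ (by linarith)).mp hεlt
    linarith

/-- If a sample point attains the maximum Tukey depth, it must be an extreme point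
(vertex) of the Tukey median region. -/
theorem deepest_sample_point_is_extreme {p n : ℕ} (hp : 1 ≤ p) (hn : p < n)
    (X : Fin n → EuclideanSpace ℝ (Fin p))
    (hgp : InGeneralPosition X)
    (l : Fin n) (hl : tukeyDepth X (X l) = maxDepth X) :
    X l ∈ Set.extremePoints ℝ (medianRegion X) := by
  classical
  have hn0 : 0 < n := by omega
  -- a nonzero direction exists
  have hu0 : (EuclideanSpace.single (⟨0, hp⟩ : Fin p) (1:ℝ)) ≠ 0 := by
    intro h
    have := congrArg (fun f => f (⟨0, hp⟩ : Fin p)) h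
    simp [EuclideanSpace.single_apply] at this
  have hSne : ∀ x : EuclideanSpace ℝ (Fin p),
      {k : ℕ | ∃ u : EuclideanSpace ℝ (Fin p), u ≠ 0 ∧ k = depthCount X u x}.Nonempty :=
    fun x => ⟨_, EuclideanSpace.single (⟨0, hp⟩ : Fin p) (1:ℝ), hu0, rfl⟩
  -- equal depths give equal infima of counts
  have hinf_eq : ∀ x : EuclideanSpace ℝ (Fin p), x ∈ medianRegion X →
      sInf {k : ℕ | ∃ u : EuclideanSpace ℝ (Fin p), u ≠ 0 ∧ k = depthCount X u x}
        = sInf {k : ℕ | ∃ u : EuclideanSpace ℝ (Fin p), u ≠ 0 ∧ k = depthCount X u (X l)} := by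
    intro x hx
    have h : tukeyDepth X x = tukeyDepth X (X l) := hx.trans hl.symm
    unfold tukeyDepth at h
    have hn' : (n:ℝ) ≠ 0 := Nat.cast_ne_zero.mpr hn0.ne'
    field_simp at h
    exact_mod_cast h
  obtain ⟨v, hv, hvm⟩ := Nat.sInf_mem (hSne (X l))
  refine ⟨hl, ?_⟩
  intro x₁ h₁ x₂ h₂ hseg
  obtain ⟨a, b, ha, hb, hab, hsum⟩ := hseg
  by_cases hx1 : x₁ = X l
  · exact hx1
  · exfalso
    have hS1 := hinf_eq x₁ h₁
    have hS2 := hinf_eq x₂ h₂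
    rcases lt_trichotomy ⟪v, x₁⟫ ⟪v, X l⟫ with hc | hc | hc
    · exact no_lower X l x₁ v hv hc _ (le_of_eq hvm.symm) hS1
    · -- hyperplane case: perturb the direction
      obtain ⟨ε, hε, hcount⟩ := perturb hn0 X l v (X l - x₁)
      set w : EuclideanSpace ℝ (Fin p) := X l - x₁ with hw
      have hwne : w ≠ 0 := sub_ne_zero.mpr (Ne.symm hx1)
      have hwpos : (0:ℝ) < ⟪w, w⟫ := by
        rw [real_inner_self_eq_norm_sq]
        have := norm_pos_iff.mpr hwne
        positivity
      set v' : EuclideanSpace ℝ (Fin p) := v + ε • w with hv'def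
      have hlt : ⟪v', x₁⟫ < ⟪v', X l⟫ := by
        have hdiff : ⟪v', X l⟫ - ⟪v', x₁⟫ = (⟪v, X l⟫ - ⟪v, x₁⟫) + ε * ⟪w, w⟫ := by
          rw [hv'def, hw]
          simp only [inner_add_left, real_inner_smul_left, inner_sub_right]
          ring
        nlinarith
      have hv' : v' ≠ 0 := by
        intro h0
        rw [h0] at hlt
        simp at hlt
      exact no_lower X l x₁ v' hv' hlt _ (le_of_le_of_eq hcount hvm.symm) hS1
    · have hXl : ⟪v, X l⟫ = a * ⟪v, x₁⟫ + b * ⟪v, x₂⟫ := by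
        rw [← hsum]
        simp only [inner_add_right, real_inner_smul_right]
      have hc2 : ⟪v, x₂⟫ < ⟪v, X l⟫ := by
        by_contra hge
        push_neg at hge
        have h1 : a * ⟪v, X l⟫ < a * ⟪v, x₁⟫ := by nlinarith
        have h2 : b * ⟪v, X l⟫ ≤ b * ⟪v, x₂⟫ := by nlinarith
        have hsumt : a * ⟪v, X l⟫ + b * ⟪v, X l⟫ = ⟪v, X l⟫ := by
          rw [← add_mul, hab, one_mul]
        linarith
      exact no_lower X l x₂ v hv hc2 _ (le_of_eq hvm.symm) hS2
end

section
/- Suppose the data set X^n in ℝ^p (with n > p ≥ 1) is in general position. Then no sample point X_l (l ∈ {1,…,n}) belongs to the topological interior of the Tukey median region M. -/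
open scoped RealInnerProductSpace

lemma depthCount_eq_ncard {p n : ℕ} (X : Fin n → EuclideanSpace ℝ (Fin p))
    (u x : EuclideanSpace ℝ (Fin p)) :
    depthCount X u x = {i : Fin n | ⟪u, X i⟫ ≤ ⟪u, x⟫}.ncard := by
  rw [← Nat.card_coe_set_eq]
  rfl

/-- No sample point of a data set in general position belongs to the topological
interior of the Tukey median region. -/
theorem sample_point_not_mem_interior_medianRegion {p n : ℕ} (hp : 1 ≤ p) (hn : p < n)
    (X : Fin n → EuclideanSpace ℝ (Fin p))
    (hgp : InGeneralPosition X) :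
    ∀ l : Fin n, X l ∉ interior (medianRegion X) := by
  intro l hl
  have hn0 : (0 : ℝ) < n := by exact_mod_cast lt_of_le_of_lt (Nat.zero_le p) hn
  -- a nonzero vector
  have hv0 : (EuclideanSpace.single (⟨0, hp⟩ : Fin p) (1 : ℝ)) ≠ 0 := by
    intro h
    have := congrArg (fun f => f (⟨0, hp⟩ : Fin p)) h
    simp [EuclideanSpace.single_apply] at this
  -- the infimum in the depth of `X l` is attained at some `u ≠ 0`
  set S : Set ℕ := {k : ℕ | ∃ u : EuclideanSpace ℝ (Fin p), u ≠ 0 ∧ k = depthCount X u (X l)}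
    with hS
  have hSne : S.Nonempty := ⟨_, _, hv0, rfl⟩
  obtain ⟨u, hu0, hku⟩ := Nat.sInf_mem hSne
  have hunorm : (0 : ℝ) < ‖u‖ := norm_pos_iff.mpr hu0
  -- extract a ball inside the median region
  rw [mem_interior_iff_mem_nhds, Metric.mem_nhds_iff] at hl
  obtain ⟨ε, hε, hball⟩ := hl
  set t : ℝ := ε / (2 * ‖u‖) with ht
  have ht0 : 0 < t := div_pos hε (by positivity)
  set x : EuclideanSpace ℝ (Fin p) := X l - t • u with hx
  have hx_ball : x ∈ Metric.ball (X l) ε := by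
    rw [Metric.mem_ball, dist_eq_norm]
    have : x - X l = -(t • u) := by rw [hx]; abel
    rw [this, norm_neg, norm_smul, Real.norm_of_nonneg ht0.le]
    have htu : t * ‖u‖ = ε / 2 := by
      rw [ht]; field_simp
    rw [htu]; linarith
  have hxM : x ∈ medianRegion X := hball hx_ball
  have hlM : X l ∈ medianRegion X := hball (Metric.mem_ball_self hε)
  have heq : tukeyDepth X x = tukeyDepth X (X l) := by
    rw [hxM, hlM]
  -- inner product of u with x
  have hinner : ⟪u, x⟫ = ⟪u, X l⟫ - t * ‖u‖ ^ 2 := by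
    rw [hx, inner_sub_right, real_inner_smul_right, real_inner_self_eq_norm_sq]
  have hinner_lt : ⟪u, x⟫ < ⟪u, X l⟫ := by
    rw [hinner]
    have : 0 < t * ‖u‖ ^ 2 := by positivity
    linarith
  -- the count strictly drops
  have hcount : depthCount X u x < depthCount X u (X l) := by
    rw [depthCount_eq_ncard, depthCount_eq_ncard]
    apply Set.ncard_lt_ncard _ (Set.toFinite _)
    constructor
    · intro i hi
      exact le_trans hi hinner_lt.le
    · intro hsub
      have hl_mem : l ∈ {i : Fin n | ⟪u, X i⟫ ≤ ⟪u, X l⟫} := by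
        show ⟪u, X l⟫ ≤ ⟪u, X l⟫
        exact le_refl _
      have := hsub hl_mem
      simp only [Set.mem_setOf_eq] at this
      exact absurd (lt_of_le_of_lt this hinner_lt) (lt_irrefl _)
  -- hence the infimum for x is strictly smaller
  have hle : sInf {k : ℕ | ∃ u : EuclideanSpace ℝ (Fin p), u ≠ 0 ∧ k = depthCount X u x}
      ≤ depthCount X u x := Nat.sInf_le ⟨u, hu0, rfl⟩
  have hlt : sInf {k : ℕ | ∃ u : EuclideanSpace ℝ (Fin p), u ≠ 0 ∧ k = depthCount X u x}
      < sInf S := by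
    rw [hku]
    exact lt_of_le_of_lt hle hcount
  -- but equal depths give equal infima : contradiction
  have : ((sInf {k : ℕ | ∃ u : EuclideanSpace ℝ (Fin p), u ≠ 0 ∧ k = depthCount X u x} : ℕ) : ℝ)
      = ((sInf S : ℕ) : ℝ) := by
    have h1 := heq
    rw [tukeyDepth, tukeyDepth, div_eq_div_iff (ne_of_gt hn0) (ne_of_gt hn0)] at h1
    exact mul_right_cancel₀ (ne_of_gt hn0) h1
  have : sInf {k : ℕ | ∃ u : EuclideanSpace ℝ (Fin p), u ≠ 0 ∧ k = depthCount X u x}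
      = sInf S := by exact_mod_cast this
  omega
end

section
/- Let z ∈ ℝ^p and let u ∈ ℝ^p be nonzero. Let J = {i ∈ {1,…,n} : ⟨u, X_i⟩ = ⟨u, z⟩} be the set of sample points lying on the hyperplane through z with normal u, and suppose that z does not belong to the affine hull of {X_i : i ∈ J}. Then the hyperplane can be tilted around z so as to place all points X_i, i ∈ J, strictly on one side, and consequently D(z) ≤ (1/n) · min( #{i : ⟨u, X_i⟩ < ⟨u, z⟩}, #{i : ⟨u, X_i⟩ > ⟨u, z⟩} ). -/
open scoped RealInnerProductSpace

/-- If `z` does not lie in the affine hull of the sample points on the hyperplane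
through `z` with normal `u`, then the hyperplane can be tilted around `z` so as to place
all those points strictly on one side, and consequently
`D(z) ≤ (1/n)·min(#{⟪u,Xᵢ⟫ < ⟪u,z⟫}, #{⟪u,Xᵢ⟫ > ⟪u,z⟫})`. -/
theorem depth_le_of_not_mem_affineSpan {p n : ℕ} (hp : 1 ≤ p) (hn : 1 ≤ n)
    (X : Fin n → EuclideanSpace ℝ (Fin p))
    (z u : EuclideanSpace ℝ (Fin p)) (hu : u ≠ 0)
    (hz : z ∉ affineSpan ℝ (X '' {i : Fin n | ⟪u, X i⟫ = ⟪u, z⟫})) :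
    (∃ u' : EuclideanSpace ℝ (Fin p), u' ≠ 0 ∧
      ∀ i : Fin n, ⟪u, X i⟫ = ⟪u, z⟫ → ⟪u', z⟫ < ⟪u', X i⟫) ∧
    tukeyDepth X z ≤
      (min (Nat.card {i : Fin n // ⟪u, X i⟫ < ⟪u, z⟫})
           (Nat.card {i : Fin n // ⟪u, z⟫ < ⟪u, X i⟫}) : ℕ) / (n : ℝ) := by
  -- Step 1: separating direction
  obtain ⟨u', hu'0, hu'⟩ : ∃ u' : EuclideanSpace ℝ (Fin p), u' ≠ 0 ∧
      ∀ i : Fin n, ⟪u, X i⟫ = ⟪u, z⟫ → 0 < ⟪u', X i - z⟫ := by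
    by_cases hJ : ∀ i : Fin n, ⟪u, X i⟫ ≠ ⟪u, z⟫
    · exact ⟨u, hu, fun i hi => absurd hi (hJ i)⟩
    · push_neg at hJ
      obtain ⟨i₀, hi₀⟩ := hJ
      set s : Set (EuclideanSpace ℝ (Fin p)) := X '' {i : Fin n | ⟪u, X i⟫ = ⟪u, z⟫} with hs
      have hsne : s.Nonempty := ⟨X i₀, ⟨i₀, hi₀, rfl⟩⟩
      haveI : Nonempty (affineSpan ℝ s) := (hsne.affineSpan ℝ).to_subtype
      set q : EuclideanSpace ℝ (Fin p) :=
        (EuclideanGeometry.orthogonalProjection (affineSpan ℝ s) z : EuclideanSpace ℝ (Fin p))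
        with hq
      have hqmem : q ∈ affineSpan ℝ s := (EuclideanGeometry.orthogonalProjection (affineSpan ℝ s) z).2
      have hqz : q ≠ z := by
        intro h; exact hz (h ▸ hqmem)
      refine ⟨q - z, sub_ne_zero.mpr hqz, fun i hi => ?_⟩
      have hXi : X i ∈ affineSpan ℝ s := subset_affineSpan ℝ s ⟨i, hi, rfl⟩
      have horth : q - z ∈ (affineSpan ℝ s).directionᗮ := by
        have := EuclideanGeometry.orthogonalProjection_vsub_mem_direction_orthogonal (affineSpan ℝ s) z
        simpa [hq] using this
      have hdir : X i - q ∈ (affineSpan ℝ s).direction := by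
        have := AffineSubspace.vsub_mem_direction hXi hqmem
        simpa using this
      have h0 : ⟪q - z, X i - q⟫ = 0 := (Submodule.mem_orthogonal' _ _).mp horth _ hdir
      have hd : X i - z = (X i - q) + (q - z) := by abel
      rw [hd, inner_add_right, h0, zero_add, real_inner_self_eq_norm_sq]
      have : ‖q - z‖ ≠ 0 := norm_ne_zero_iff.mpr (sub_ne_zero.mpr hqz)
      positivity
  have hu'z : ∀ i : Fin n, ⟪u, X i⟫ = ⟪u, z⟫ → ⟪u', z⟫ < ⟪u', X i⟫ := by
    intro i hi
    have := hu' i hi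
    rw [inner_sub_right] at this
    linarith
  refine ⟨⟨u', hu'0, hu'z⟩, ?_⟩
  -- Step 2: choose ε
  haveI : NeZero n := ⟨by omega⟩
  set a : Fin n → ℝ := fun i => ⟪u, X i⟫ - ⟪u, z⟫ with ha
  set b : Fin n → ℝ := fun i => ⟪u', X i⟫ - ⟪u', z⟫ with hb
  set f : Fin n → ℝ := fun i => if a i = 0 then 1 else |a i| / (|b i| + 1) with hf
  have hfpos : ∀ i, 0 < f i := by
    intro i
    by_cases h : a i = 0
    · simp [hf, h]
    · have : 0 < |a i| := abs_pos.mpr h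
      have : 0 < |b i| + 1 := by positivity
      simp only [hf, if_neg h]
      positivity
  set ε : ℝ := min (‖u‖ / (‖u'‖ + 1)) (Finset.univ.inf' Finset.univ_nonempty f) with hε
  have hεpos : 0 < ε := by
    apply lt_min
    · have : 0 < ‖u‖ := norm_pos_iff.mpr hu
      positivity
    · exact (Finset.lt_inf'_iff _).mpr (fun i _ => hfpos i)
  have hεsmall : ∀ i, a i ≠ 0 → ε * |b i| < |a i| := by
    intro i hai
    have h1 : ε ≤ f i :=
      le_trans (min_le_right _ _) (Finset.inf'_le _ (Finset.mem_univ i))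
    have h2 : f i = |a i| / (|b i| + 1) := by simp [hf, hai]
    have hb1 : (0:ℝ) < |b i| + 1 := by positivity
    have h3 : f i * (|b i| + 1) = |a i| := by rw [h2]; field_simp
    have h4 : 0 < f i := hfpos i
    have h5 : 0 ≤ |b i| := abs_nonneg _
    nlinarith [abs_pos.mpr hai]
  have hεnorm : ε * ‖u'‖ < ‖u‖ := by
    have h1 : ε ≤ ‖u‖ / (‖u'‖ + 1) := min_le_left _ _
    have hu'pos : (0:ℝ) < ‖u'‖ + 1 := by positivity
    have h3 : (‖u‖ / (‖u'‖ + 1)) * (‖u'‖ + 1) = ‖u‖ := by field_simp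
    have h4 : 0 < ‖u‖ := norm_pos_iff.mpr hu
    nlinarith [norm_nonneg u', div_pos h4 hu'pos]
  -- nonzeroness of tilted normals
  have hw1 : u + ε • u' ≠ 0 := by
    intro h
    have hn1 : ‖u‖ = ‖ε • u'‖ := by rw [eq_neg_of_add_eq_zero_left h, norm_neg]
    rw [norm_smul, Real.norm_eq_abs, abs_of_pos hεpos] at hn1
    linarith
  have hw2 : -u + ε • u' ≠ 0 := by
    intro h
    have h2 : u = ε • u' := by
      have := eq_neg_of_add_eq_zero_left h
      simpa using this
    have hn1 : ‖u‖ = ‖ε • u'‖ := by rw [h2]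
    rw [norm_smul, Real.norm_eq_abs, abs_of_pos hεpos] at hn1
    linarith
  -- counting inequalities
  have key : ∀ (w : EuclideanSpace ℝ (Fin p)), ∀ i : Fin n,
      (⟪w, X i⟫ ≤ ⟪w, z⟫) ↔ ⟪w, X i - z⟫ ≤ 0 := by
    intro w i
    rw [inner_sub_right]
    constructor <;> intro h <;> linarith
  have hab : ∀ i, ⟪u, X i - z⟫ = a i ∧ ⟪u', X i - z⟫ = b i := by
    intro i
    constructor <;> rw [inner_sub_right]
  have hcount1 : depthCount X (u + ε • u') z ≤ Nat.card {i : Fin n // ⟪u, X i⟫ < ⟪u, z⟫} := by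
    apply Nat.card_le_card_of_injective
      (fun x => (⟨x.1, by
        obtain ⟨i, hi⟩ := x
        rw [key] at hi
        simp only [inner_add_left, real_inner_smul_left] at hi
        rw [(hab i).1, (hab i).2] at hi
        by_contra hlt
        push_neg at hlt
        have hai : 0 ≤ a i := by simp only [ha]; linarith
        rcases eq_or_lt_of_le hai with heq | hpos
        · have hbi : 0 < b i := by
            have := hu' i (by simp only [ha] at heq; linarith)
            rwa [(hab i).2] at this
          nlinarith
        · have := hεsmall i (ne_of_gt hpos)
          have hble : -(ε * b i) ≤ ε * |b i| := by
            have := neg_abs_le (b i)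
            have := le_abs_self (b i)
            nlinarith [hεpos.le]
          rw [abs_of_pos hpos] at this
          nlinarith⟩ : {i : Fin n // ⟪u, X i⟫ < ⟪u, z⟫}))
      (fun x y hxy => Subtype.ext (by simpa using congrArg Subtype.val hxy))
  have hcount2 : depthCount X (-u + ε • u') z ≤ Nat.card {i : Fin n // ⟪u, z⟫ < ⟪u, X i⟫} := by
    apply Nat.card_le_card_of_injective
      (fun x => (⟨x.1, by
        obtain ⟨i, hi⟩ := x
        rw [key] at hi
        simp only [inner_add_left, real_inner_smul_left, inner_neg_left] at hi
        rw [(hab i).1, (hab i).2] at hi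
        have goal : 0 < a i := by
          by_contra hlt
          push_neg at hlt
          rcases eq_or_lt_of_le hlt with heq | hneg
          · have hbi : 0 < b i := by
              have := hu' i (by simp only [ha] at heq; linarith)
              rwa [(hab i).2] at this
            nlinarith
          · have := hεsmall i (ne_of_lt hneg)
            have hble : -(ε * b i) ≤ ε * |b i| := by
              have := neg_abs_le (b i)
              have := le_abs_self (b i)
              nlinarith [hεpos.le]
            rw [abs_of_neg hneg] at this
            nlinarith
        simp only [ha] at goal
        linarith⟩ : {i : Fin n // ⟪u, z⟫ < ⟪u, X i⟫}))
      (fun x y hxy => Subtype.ext (by simpa using congrArg Subtype.val hxy))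
  -- conclude
  have hmem1 : depthCount X (u + ε • u') z ∈
      {k : ℕ | ∃ w : EuclideanSpace ℝ (Fin p), w ≠ 0 ∧ k = depthCount X w z} :=
    ⟨u + ε • u', hw1, rfl⟩
  have hmem2 : depthCount X (-u + ε • u') z ∈
      {k : ℕ | ∃ w : EuclideanSpace ℝ (Fin p), w ≠ 0 ∧ k = depthCount X w z} :=
    ⟨-u + ε • u', hw2, rfl⟩
  have hsinf : sInf {k : ℕ | ∃ w : EuclideanSpace ℝ (Fin p), w ≠ 0 ∧ k = depthCount X w z} ≤
      min (Nat.card {i : Fin n // ⟪u, X i⟫ < ⟪u, z⟫})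
          (Nat.card {i : Fin n // ⟪u, z⟫ < ⟪u, X i⟫}) := by
    apply le_min
    · exact le_trans (Nat.sInf_le hmem1) hcount1
    · exact le_trans (Nat.sInf_le hmem2) hcount2
  rw [tukeyDepth]
  gcongr
end

section
/- Suppose the data set X^n in ℝ^p (with n > p ≥ 1) is in general position. Let X_l be a sample point with D(X_l) = λ*, and let u₀ be a nonzero vector attaining the depth at X_l, i.e. #{i : ⟨u₀, X_i⟩ ≤ ⟨u₀, X_l⟩} = n·λ*. Then the open halfspace H(X_l, u₀) = {x ∈ ℝ^p : ⟨u₀, x⟩ < ⟨u₀, X_l⟩} is disjoint from the Tukey median region M: every z with ⟨u₀, z⟩ < ⟨u₀, X_l⟩ satisfies D(z) < λ*. -/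
open scoped RealInnerProductSpace

/-- If the sample point `X_l` attains the maximum depth, and the nonzero direction `u₀`
attains the depth at `X_l`, then the open halfspace `{x : ⟪u₀, x⟫ < ⟪u₀, X_l⟫}` is
disjoint from the median region: every point of it has depth `< λ*`. -/
theorem open_halfspace_disjoint_medianRegion {p n : ℕ} (hp : 1 ≤ p) (hn : p < n)
    (X : Fin n → EuclideanSpace ℝ (Fin p))
    (hgp : InGeneralPosition X)
    (l : Fin n) (hl : tukeyDepth X (X l) = maxDepth X)
    (u₀ : EuclideanSpace ℝ (Fin p)) (hu₀ : u₀ ≠ 0)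
    (hatt : (Nat.card {i : Fin n // ⟪u₀, X i⟫ ≤ ⟪u₀, X l⟫} : ℝ) = (n : ℝ) * maxDepth X) :
    ∀ z : EuclideanSpace ℝ (Fin p), ⟪u₀, z⟫ < ⟪u₀, X l⟫ → tukeyDepth X z < maxDepth X := by
  intro z hz
  have hnpos : 0 < n := lt_trans (Nat.lt_of_lt_of_le (Nat.zero_lt_one.trans_le hp) le_rfl) hn
  have hn0 : (0:ℝ) < n := by exact_mod_cast hnpos
  -- strict inclusion of count sets
  have hlt : depthCount X u₀ z < Nat.card {i : Fin n // ⟪u₀, X i⟫ ≤ ⟪u₀, X l⟫} := by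
    have h1 : {i : Fin n | ⟪u₀, X i⟫ ≤ ⟪u₀, z⟫} ⊂ {i : Fin n | ⟪u₀, X i⟫ ≤ ⟪u₀, X l⟫} := by
      constructor
      · intro i hi
        exact le_trans hi (le_of_lt hz)
      · intro hsub
        have : ⟪u₀, X l⟫ ≤ ⟪u₀, z⟫ := hsub (Set.mem_setOf_eq ▸ le_refl ⟪u₀, X l⟫)
        exact absurd hz (not_lt.mpr this)
    have hfin : {i : Fin n | ⟪u₀, X i⟫ ≤ ⟪u₀, X l⟫}.Finite := Set.toFinite _
    have := Set.ncard_lt_ncard h1 hfin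
    rw [depthCount, Nat.card_eq_fintype_card, Nat.card_eq_fintype_card]
    simpa [Set.ncard_eq_toFinset_card', Set.toFinset_setOf, Fintype.card_subtype] using this
  -- tukeyDepth z ≤ depthCount / n
  have hmem : depthCount X u₀ z ∈
      {k : ℕ | ∃ u : EuclideanSpace ℝ (Fin p), u ≠ 0 ∧ k = depthCount X u z} :=
    ⟨u₀, hu₀, rfl⟩
  have hsinf : sInf {k : ℕ | ∃ u : EuclideanSpace ℝ (Fin p), u ≠ 0 ∧ k = depthCount X u z}
      ≤ depthCount X u₀ z := Nat.sInf_le hmem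
  have h2 : tukeyDepth X z ≤ (depthCount X u₀ z : ℝ) / n := by
    unfold tukeyDepth
    exact div_le_div_of_nonneg_right (by exact_mod_cast hsinf) hn0.le
  have h3 : (depthCount X u₀ z : ℝ) / n < maxDepth X := by
    rw [div_lt_iff₀ hn0]
    calc (depthCount X u₀ z : ℝ)
        < (Nat.card {i : Fin n // ⟪u₀, X i⟫ ≤ ⟪u₀, X l⟫} : ℝ) := by exact_mod_cast hlt
      _ = n * maxDepth X := hatt
      _ = maxDepth X * n := mul_comm _ _
  exact lt_of_le_of_lt h2 h3
end
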